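/- arXiv:0807.1825 — 6 statements merged into one kernel-verified Lean document; each statement's English description precedes it below -/
import Mathlib

section
/- Let 0 < α < 2. For each fixed t ∈ (0,1), the function p ↦ (t^p − 1)(1 − t^{α−p−1}) / (1 − t)^{1+α}, defined for p ∈ (−1, α), is convex and is symmetric with respect to the point p = (α−1)/2, i.e. it takes equal values at p and at α − 1 − p. -/
open MeasureTheory Real Set

lemma exp_affine_convex (a b : ℝ) : ConvexOn ℝ Set.univ (fun x : ℝ => Real.exp (a * x + b)) := by
  have h := convexOn_exp.comp_affineMap (AffineMap.lineMap b (a + b))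
  simp only [Set.preimage_univ] at h
  convert h using 2 with x
  iterate 4 rfl
  simp [AffineMap.lineMap_apply, Function.comp]
  ring_nf

theorem gamma_integrand_convex_symmetric (α : ℝ) (hα0 : 0 < α) (hα2 : α < 2)
    (t : ℝ) (ht0 : 0 < t) (ht1 : t < 1) :
    ConvexOn ℝ (Set.Ioo (-1 : ℝ) α)
        (fun p : ℝ => (t ^ p - 1) * (1 - t ^ (α - p - 1)) / (1 - t) ^ (1 + α)) ∧
      ∀ p ∈ Set.Ioo (-1 : ℝ) α,
        (t ^ p - 1) * (1 - t ^ (α - p - 1)) / (1 - t) ^ (1 + α) =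
          (t ^ (α - 1 - p) - 1) * (1 - t ^ (α - (α - 1 - p) - 1)) / (1 - t) ^ (1 + α) := by
  have hlt : (0:ℝ) < 1 - t := by linarith
  set c : ℝ := ((1 - t) ^ (1 + α))⁻¹ with hc
  have hcpos : 0 ≤ c := le_of_lt (inv_pos.mpr (rpow_pos_of_pos hlt _))
  constructor
  · have key : ∀ p : ℝ, (t ^ p - 1) * (1 - t ^ (α - p - 1)) / (1 - t) ^ (1 + α)
        = c * Real.exp (Real.log t * p + 0)
          + (c * Real.exp ((-Real.log t) * p + (α - 1) * Real.log t)
            + c * (-(t ^ (α - 1) + 1))) := by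
      intro p
      have e1 : t ^ p = Real.exp (Real.log t * p) := rpow_def_of_pos ht0 p
      have e2 : t ^ (α - p - 1) = Real.exp (Real.log t * (α - p - 1)) := rpow_def_of_pos ht0 _
      have e3 : t ^ p * t ^ (α - p - 1) = t ^ (α - 1) := by
        rw [← rpow_add ht0]; ring_nf
      rw [div_eq_mul_inv, ← hc]
      have e2' : t ^ (α - p - 1) = Real.exp ((-Real.log t) * p + (α - 1) * Real.log t) := by
        rw [e2]; ring_nf
      have e1' : t ^ p = Real.exp (Real.log t * p + 0) := by rw [e1, add_zero]
      nlinarith [e1', e2', e3]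
    have hconv : ConvexOn ℝ Set.univ
        (fun p : ℝ => c * Real.exp (Real.log t * p + 0)
          + (c * Real.exp ((-Real.log t) * p + (α - 1) * Real.log t)
            + c * (-(t ^ (α - 1) + 1)))) := by
      exact ((exp_affine_convex _ _).smul hcpos).add
        (((exp_affine_convex _ _).smul hcpos).add (convexOn_const _ convex_univ))
    have := hconv.subset (Set.subset_univ (Set.Ioo (-1:ℝ) α)) (convex_Ioo _ _)
    refine this.congr ?_
    intro p _
    exact (key p).symm
  · intro p _
    have h1 : α - (α - 1 - p) - 1 = p := by ring
    have h2 : α - p - 1 = α - 1 - p := by ring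
    rw [h1, h2]
    ring
end

section
/- Let 0 < α < 2. The function p ↦ γ(α,p) = ∫_0^1 (t^p − 1)(1 − t^{α−p−1}) / (1 − t)^{1+α} dt on (−1, α) attains its minimum at p = (α−1)/2; that is, γ(α,p) ≥ γ(α,(α−1)/2) for all p ∈ (−1, α). -/
open MeasureTheory Real Set

/-- Near 1, `|t^q - 1| ≤ C (1-t)`. -/
lemma rpow_near_one_bound (q : ℝ) :
    ∃ C : ℝ, 0 ≤ C ∧ ∀ t ∈ Set.Icc (1/2 : ℝ) 1, |t ^ q - 1| ≤ C * (1 - t) := by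
  refine ⟨|q| * 2 ^ |q - 1|, by positivity, fun t ht => ?_⟩
  have h2 : ∀ x ∈ Set.Icc (1/2 : ℝ) 1, ‖q * x ^ (q - 1)‖ ≤ |q| * 2 ^ |q - 1| := by
    intro x hx
    have hx0 : (0:ℝ) < x := by linarith [hx.1]
    rw [norm_mul, Real.norm_eq_abs, Real.norm_eq_abs, abs_of_nonneg (Real.rpow_nonneg hx0.le _)]
    apply mul_le_mul_of_nonneg_left _ (abs_nonneg q)
    rcases le_or_gt 0 (q - 1) with h | h
    · calc x ^ (q - 1) ≤ 1 ^ (q - 1) := Real.rpow_le_rpow hx0.le hx.2 h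
        _ = 1 := Real.one_rpow _
        _ ≤ 2 ^ |q - 1| := Real.one_le_rpow one_le_two (abs_nonneg _)
    · calc x ^ (q - 1) ≤ (1/2 : ℝ) ^ (q - 1) :=
          Real.rpow_le_rpow_of_nonpos (by norm_num) hx.1 h.le
        _ = 2 ^ |q - 1| := by
          rw [abs_of_neg h, one_div, Real.inv_rpow (by norm_num), ← Real.rpow_neg (by norm_num)]
  have key := (convex_Icc (1/2 : ℝ) 1).norm_image_sub_le_of_norm_hasDerivWithin_le
    (f := fun x => x ^ q) (f' := fun x => q * x ^ (q - 1))
    (fun x hx => (Real.hasDerivAt_rpow_const (Or.inl (by linarith [hx.1] : x ≠ 0))).hasDerivWithinAt)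
    h2 (Set.right_mem_Icc.2 (by norm_num)) ht
  simpa [Real.one_rpow, Real.norm_eq_abs, abs_of_nonpos (by linarith [ht.2] : t - 1 ≤ 0)] using key

lemma integrableOn_rpow_Ioc_half {e : ℝ} (he : -1 < e) :
    MeasureTheory.IntegrableOn (fun t : ℝ => t ^ e) (Set.Ioc 0 (1/2 : ℝ)) := by
  have := (intervalIntegral.intervalIntegrable_rpow' he (a := 0) (b := 1/2))
  rwa [intervalIntegrable_iff_integrableOn_Ioc_of_le (by norm_num)] at this

lemma integrableOn_gamma {α p : ℝ} (hα0 : 0 < α) (hα2 : α < 2) (hp1 : -1 < p) (hpα : p < α) :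
    MeasureTheory.IntegrableOn
      (fun t : ℝ => (t ^ p - 1) * (1 - t ^ (α - p - 1)) / (1 - t) ^ (1 + α))
      (Set.Ioo (0 : ℝ) 1) := by
  have hmeas : AEStronglyMeasurable
      (fun t : ℝ => (t ^ p - 1) * (1 - t ^ (α - p - 1)) / (1 - t) ^ (1 + α))
      (volume.restrict (Set.Ioo (0:ℝ) 1)) := by
    apply Measurable.aestronglyMeasurable
    fun_prop
  have hsplit : Set.Ioo (0:ℝ) 1 = Set.Ioc 0 (1/2) ∪ Set.Ioo (1/2) 1 := by
    ext x
    simp only [Set.mem_Ioo, Set.mem_Ioc, Set.mem_union]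
    constructor
    · rintro ⟨h1, h2⟩; rcases le_or_gt x (1/2) with h | h
      · exact Or.inl ⟨h1, h⟩
      · exact Or.inr ⟨h, h2⟩
    · rintro (⟨h1, h2⟩ | ⟨h1, h2⟩) <;> constructor <;> linarith
  rw [hsplit]
  apply MeasureTheory.IntegrableOn.union
  · -- near 0
    apply MeasureTheory.Integrable.mono
      (g := fun t : ℝ => (2:ℝ) ^ (1+α) * (t ^ p + t ^ (α - p - 1) + t ^ (α - 1) + 1))
    · apply MeasureTheory.Integrable.const_mul
      refine (((integrableOn_rpow_Ioc_half hp1).add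
        (integrableOn_rpow_Ioc_half (by linarith))).add
        (integrableOn_rpow_Ioc_half (by linarith))).add ?_
      exact integrableOn_const (by simp [Real.volume_Ioc])
    · exact hmeas.mono_measure (Measure.restrict_mono (by rw [hsplit]; exact Set.subset_union_left) le_rfl)
    · filter_upwards [ae_restrict_mem measurableSet_Ioc] with t ht
      obtain ⟨ht0, ht2⟩ := ht
      have h1t : (0:ℝ) < 1 - t := by linarith
      have hD : (0:ℝ) < (1 - t) ^ (1 + α) := Real.rpow_pos_of_pos h1t _
      have hDge : (1:ℝ) ≤ (2:ℝ) ^ (1+α) * (1 - t) ^ (1 + α) := by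
        have : ((1:ℝ)/2) ^ (1+α) ≤ (1 - t) ^ (1 + α) :=
          Real.rpow_le_rpow (by norm_num) (by linarith) (by linarith)
        calc (1:ℝ) = (2 * (1/2) : ℝ) ^ (1+α) := by norm_num
          _ = (2:ℝ) ^ (1+α) * ((1:ℝ)/2) ^ (1+α) :=
            Real.mul_rpow (by norm_num) (by norm_num)
          _ ≤ (2:ℝ) ^ (1+α) * (1 - t) ^ (1 + α) := by
            apply mul_le_mul_of_nonneg_left this (Real.rpow_nonneg (by norm_num) _)
      have hup : (0:ℝ) ≤ t ^ p := Real.rpow_nonneg ht0.le _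
      have huq : (0:ℝ) ≤ t ^ (α - p - 1) := Real.rpow_nonneg ht0.le _
      have hprod : t ^ p * t ^ (α - p - 1) = t ^ (α - 1) := by
        rw [← Real.rpow_add ht0]; ring_nf
      have hnum : |(t ^ p - 1) * (1 - t ^ (α - p - 1))|
          ≤ t ^ p + t ^ (α - p - 1) + t ^ (α - 1) + 1 := by
        rw [abs_mul]
        calc |t ^ p - 1| * |1 - t ^ (α - p - 1)|
            ≤ (t ^ p + 1) * (1 + t ^ (α - p - 1)) := by
              apply mul_le_mul (abs_sub _ _ |>.trans ?_) (abs_sub _ _ |>.trans ?_)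
                (abs_nonneg _) (by positivity)
              · simp [abs_of_nonneg hup]
              · simp [abs_of_nonneg huq]
          _ = t ^ p + t ^ (α - 1) + 1 + t ^ (α - p - 1) := by
              rw [← hprod]; ring
          _ ≤ t ^ p + t ^ (α - p - 1) + t ^ (α - 1) + 1 := le_of_eq (by ring)
      have hSnn : (0:ℝ) ≤ t ^ p + t ^ (α - p - 1) + t ^ (α - 1) + 1 := by positivity
      rw [Real.norm_eq_abs, Real.norm_eq_abs, abs_div, abs_of_pos hD,
        abs_of_nonneg (by positivity : (0:ℝ) ≤ (2:ℝ) ^ (1+α) * (t ^ p + t ^ (α - p - 1) + t ^ (α - 1) + 1)),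
        div_le_iff₀ hD]
      calc |(t ^ p - 1) * (1 - t ^ (α - p - 1))|
          ≤ (t ^ p + t ^ (α - p - 1) + t ^ (α - 1) + 1) * 1 := by
            rw [mul_one]; exact hnum
        _ ≤ (t ^ p + t ^ (α - p - 1) + t ^ (α - 1) + 1)
            * ((2:ℝ) ^ (1+α) * (1 - t) ^ (1 + α)) :=
            mul_le_mul_of_nonneg_left hDge hSnn
        _ = (2:ℝ) ^ (1+α) * (t ^ p + t ^ (α - p - 1) + t ^ (α - 1) + 1)
            * (1 - t) ^ (1 + α) := by ring
  · -- near 1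
    obtain ⟨Cp, hCp0, hCp⟩ := rpow_near_one_bound p
    obtain ⟨Cq, hCq0, hCq⟩ := rpow_near_one_bound (α - p - 1)
    apply MeasureTheory.Integrable.mono
      (g := fun t : ℝ => Cp * Cq * (1 - t) ^ (1 - α))
    · apply MeasureTheory.IntegrableOn.mono_set _ Set.Ioo_subset_Ioc_self
      have h1 : IntervalIntegrable (fun x : ℝ => x ^ (1 - α)) volume 0 (1/2) :=
        intervalIntegral.intervalIntegrable_rpow' (by linarith)
      have h2 := (h1.symm.comp_sub_left 1).const_mul (Cp * Cq)
      norm_num at h2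
      rwa [intervalIntegrable_iff_integrableOn_Ioc_of_le (by norm_num)] at h2
    · exact hmeas.mono_measure (Measure.restrict_mono (by rw [hsplit]; exact Set.subset_union_right) le_rfl)
    · filter_upwards [ae_restrict_mem measurableSet_Ioo] with t ht
      obtain ⟨ht2, ht1⟩ := ht
      have h1t : (0:ℝ) < 1 - t := by linarith
      have hD : (0:ℝ) < (1 - t) ^ (1 + α) := Real.rpow_pos_of_pos h1t _
      have htIcc : t ∈ Set.Icc (1/2 : ℝ) 1 := ⟨ht2.le, ht1.le⟩
      have hp' := hCp t htIcc
      have hq' : |1 - t ^ (α - p - 1)| ≤ Cq * (1 - t) := by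
        rw [abs_sub_comm]; exact hCq t htIcc
      have hRnn : (0:ℝ) ≤ Cp * Cq * (1 - t) ^ (1 - α) :=
        mul_nonneg (mul_nonneg hCp0 hCq0) (Real.rpow_nonneg h1t.le _)
      rw [Real.norm_eq_abs, Real.norm_eq_abs, abs_div, abs_of_pos hD,
        abs_of_nonneg hRnn, div_le_iff₀ hD, abs_mul]
      calc |t ^ p - 1| * |1 - t ^ (α - p - 1)|
          ≤ (Cp * (1 - t)) * (Cq * (1 - t)) :=
            mul_le_mul hp' hq' (abs_nonneg _) (by positivity)
        _ = Cp * Cq * ((1 - t) ^ (2:ℝ)) := by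
            rw [Real.rpow_two]; ring
        _ = Cp * Cq * ((1 - t) ^ (1 - α) * (1 - t) ^ (1 + α)) := by
            rw [← Real.rpow_add h1t]; norm_num
        _ = Cp * Cq * (1 - t) ^ (1 - α) * (1 - t) ^ (1 + α) := by ring


theorem gamma_min_at_midpoint (α : ℝ) (hα0 : 0 < α) (hα2 : α < 2)
    (p : ℝ) (hp1 : -1 < p) (hpα : p < α) :
    (∫ t in Set.Ioo (0 : ℝ) 1,
        (t ^ ((α - 1) / 2) - 1) * (1 - t ^ (α - (α - 1) / 2 - 1)) / (1 - t) ^ (1 + α)) ≤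
      ∫ t in Set.Ioo (0 : ℝ) 1,
        (t ^ p - 1) * (1 - t ^ (α - p - 1)) / (1 - t) ^ (1 + α) := by
  apply MeasureTheory.setIntegral_mono_on
  · exact integrableOn_gamma hα0 hα2 (by linarith) (by linarith)
  · exact integrableOn_gamma hα0 hα2 hp1 hpα
  · exact measurableSet_Ioo
  · intro t ht
    obtain ⟨ht0, ht1⟩ := ht
    have h1t : (0:ℝ) < 1 - t := by linarith
    have hD : (0:ℝ) < (1 - t) ^ (1 + α) := Real.rpow_pos_of_pos h1t _
    have hmid : α - (α - 1) / 2 - 1 = (α - 1) / 2 := by ring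
    rw [hmid]
    set u := t ^ (p / 2) with hu
    set v := t ^ ((α - 1 - p) / 2) with hv
    have hu2 : t ^ p = u * u := by
      have h : p / 2 + p / 2 = p := by ring
      rw [← h, Real.rpow_add ht0]
    have hv2 : t ^ (α - p - 1) = v * v := by
      have h : (α - 1 - p) / 2 + (α - 1 - p) / 2 = α - p - 1 := by ring
      rw [← h, Real.rpow_add ht0]
    have huv : t ^ ((α - 1) / 2) = u * v := by
      have h : p / 2 + (α - 1 - p) / 2 = (α - 1) / 2 := by ring
      rw [← h, Real.rpow_add ht0]
    rw [hu2, hv2, huv]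
    have hnum : (u * v - 1) * (1 - u * v) ≤ (u * u - 1) * (1 - v * v) := by
      nlinarith [sq_nonneg (u - v)]
    exact div_le_div_of_nonneg_right hnum hD.le
end

section
/- For every 0 < α < 2, γ(α,(α−1)/2) = −(1/α)·[B((1+α)/2, (2−α)/2)·2^{−α} − 1], where γ(α,p) = ∫_0^1 (t^p − 1)(1 − t^{α−p−1}) / (1 − t)^{1+α} dt and B is the Euler beta function. -/
set_option maxHeartbeats 1000000

open MeasureTheory Real Set Filter

/-- The Euler beta function. -/
noncomputable def eulerBeta (a b : ℝ) : ℝ := Real.Gamma a * Real.Gamma b / Real.Gamma (a + b)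

lemma my_ftc_Ioo {G f : ℝ → ℝ} {L0 L1 : ℝ}
    (hderiv : ∀ t ∈ Ioo (0:ℝ) 1, HasDerivAt G (f t) t)
    (hint : IntegrableOn f (Ioo (0:ℝ) 1))
    (h0 : Tendsto G (nhdsWithin 0 (Ioi 0)) (nhds L0))
    (h1 : Tendsto G (nhdsWithin 1 (Iio 1)) (nhds L1)) :
    ∫ t in Ioo (0:ℝ) 1, f t = L1 - L0 := by
  set a : ℕ → ℝ := fun n => 1 / (n + 2) with ha_def
  set b : ℕ → ℝ := fun n => 1 - 1 / (n + 2) with hb_def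
  have hapos : ∀ n, 0 < a n := fun n => by positivity
  have hahalf : ∀ n, a n ≤ 1/2 := fun n => by
    simp only [ha_def]
    rw [div_le_div_iff₀ (by positivity) (by norm_num)]
    have : (0:ℝ) ≤ n := Nat.cast_nonneg n
    linarith
  have hab : ∀ n, a n ≤ b n := fun n => by
    have := hahalf n; simp only [hb_def]; linarith
  have hblt : ∀ n, b n < 1 := fun n => by
    have := hapos n; simp only [hb_def]; linarith
  have hsub : ∀ n, Icc (a n) (b n) ⊆ Ioo (0:ℝ) 1 := fun n x hx =>
    ⟨lt_of_lt_of_le (hapos n) hx.1, lt_of_le_of_lt hx.2 (hblt n)⟩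
  have hta : Tendsto a atTop (nhds 0) := by
    have h2 : Tendsto (fun n : ℕ => ((n : ℝ) + 2)) atTop atTop :=
      tendsto_atTop_add_const_right _ 2 tendsto_natCast_atTop_atTop
    simpa [ha_def, one_div, Pi.inv_def] using h2.inv_tendsto_atTop
  have htb : Tendsto b atTop (nhds 1) := by
    have h1' : Tendsto (fun _ : ℕ => (1:ℝ)) atTop (nhds 1) := tendsto_const_nhds
    simpa [hb_def, ha_def, one_div] using h1'.sub hta
  have hφ : AECover ((volume : Measure ℝ).restrict (Ioo 0 1)) atTop
      (fun n => Icc (a n) (b n)) := aecover_Ioo_of_Icc hta htb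
  refine hφ.integral_eq_of_tendsto _ hint ?_
  have key : ∀ n, ∫ x in Icc (a n) (b n), f x ∂((volume : Measure ℝ).restrict (Ioo 0 1))
      = G (b n) - G (a n) := by
    intro n
    rw [Measure.restrict_restrict measurableSet_Icc, inter_eq_left.mpr (hsub n),
      integral_Icc_eq_integral_Ioc, ← intervalIntegral.integral_of_le (hab n)]
    refine intervalIntegral.integral_eq_sub_of_hasDerivAt (fun x hx => ?_) ?_
    · exact hderiv x (hsub n (by rwa [uIcc_of_le (hab n)] at hx))
    · refine (hint.mono_set ?_).intervalIntegrable
      rw [uIcc_of_le (hab n)]; exact hsub n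
  rw [tendsto_congr key]
  have hb1 : Tendsto b atTop (nhdsWithin 1 (Iio 1)) :=
    tendsto_nhdsWithin_iff.mpr ⟨htb, Eventually.of_forall hblt⟩
  have ha0 : Tendsto a atTop (nhdsWithin 0 (Ioi 0)) :=
    tendsto_nhdsWithin_iff.mpr ⟨hta, Eventually.of_forall hapos⟩
  exact ((h1.comp hb1).sub (h0.comp ha0))

lemma my_beta_integrable {a b : ℝ} (ha : 0 < a) (hb : 0 < b) :
    IntegrableOn (fun t : ℝ => t ^ (a - 1) * (1 - t) ^ (b - 1)) (Ioo (0:ℝ) 1) := by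
  have hc := Complex.betaIntegral_convergent (u := (a:ℂ)) (v := (b:ℂ)) (by simpa) (by simpa)
  have hc' : IntegrableOn (fun x : ℝ => (x : ℂ) ^ ((a:ℂ) - 1) * ((1:ℂ) - x) ^ ((b:ℂ) - 1))
      (Ioo (0:ℝ) 1) :=
    (intervalIntegrable_iff_integrableOn_Ioo_of_le (by norm_num : (0:ℝ) ≤ 1)).mp hc
  refine IntegrableOn.congr_fun hc'.re (fun x hx => ?_) measurableSet_Ioo
  have hx0 : (0:ℝ) ≤ x := le_of_lt hx.1
  have hx1 : (0:ℝ) ≤ 1 - x := by linarith [hx.2]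
  have e1 : ((1:ℂ) - (x:ℝ)) = ((1 - x : ℝ) : ℂ) := by push_cast; ring
  have e2 : ((a:ℂ) - 1) = ((a - 1 : ℝ) : ℂ) := by push_cast; ring
  have e3 : ((b:ℂ) - 1) = ((b - 1 : ℝ) : ℂ) := by push_cast; ring
  rw [e1, e2, e3, ← Complex.ofReal_cpow hx0, ← Complex.ofReal_cpow hx1, ← Complex.ofReal_mul]
  simp

lemma my_beta_eval {a b : ℝ} (ha : 0 < a) (hb : 0 < b) :
    ∫ t in Ioo (0:ℝ) 1, t ^ (a - 1) * (1 - t) ^ (b - 1) = eulerBeta a b := by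
  have key := Complex.Gamma_mul_Gamma_eq_betaIntegral (s := (a:ℂ)) (t := (b:ℂ))
    (by simpa) (by simpa)
  have hBeta : Complex.betaIntegral (a:ℂ) (b:ℂ)
      = ((∫ t in Ioo (0:ℝ) 1, t ^ (a - 1) * (1 - t) ^ (b - 1) : ℝ) : ℂ) := by
    rw [Complex.betaIntegral, intervalIntegral.integral_of_le (by norm_num : (0:ℝ) ≤ 1),
      integral_Ioc_eq_integral_Ioo]
    have hoR : (∫ t in Ioo (0:ℝ) 1, ((t ^ (a-1) * (1-t) ^ (b-1) : ℝ) : ℂ))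
        = ((∫ t in Ioo (0:ℝ) 1, t ^ (a-1) * (1-t) ^ (b-1) : ℝ) : ℂ) := integral_ofReal
    rw [← hoR]
    refine setIntegral_congr_fun measurableSet_Ioo (fun x hx => ?_)
    have hx0 : (0:ℝ) ≤ x := le_of_lt hx.1
    have hx1 : (0:ℝ) ≤ 1 - x := by linarith [hx.2]
    have e1 : ((1:ℂ) - (x:ℝ)) = ((1 - x : ℝ) : ℂ) := by push_cast; ring
    have e2 : ((a:ℂ) - 1) = ((a - 1 : ℝ) : ℂ) := by push_cast; ring
    have e3 : ((b:ℂ) - 1) = ((b - 1 : ℝ) : ℂ) := by push_cast; ring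
    rw [e1, e2, e3, ← Complex.ofReal_cpow hx0, ← Complex.ofReal_cpow hx1, ← Complex.ofReal_mul]
  rw [hBeta, show ((a:ℂ) + (b:ℂ)) = ((a + b : ℝ) : ℂ) by push_cast; ring,
    Complex.Gamma_ofReal, Complex.Gamma_ofReal, Complex.Gamma_ofReal] at key
  have habpos : 0 < Real.Gamma (a + b) := Real.Gamma_pos_of_pos (by linarith)
  have : ((Real.Gamma a * Real.Gamma b : ℝ) : ℂ)
      = ((Real.Gamma (a + b) * ∫ t in Ioo (0:ℝ) 1, t ^ (a - 1) * (1 - t) ^ (b - 1) : ℝ) : ℂ) := by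
    push_cast
    rw [key]
  have hreal := Complex.ofReal_inj.mp this
  rw [eulerBeta, eq_div_iff habpos.ne']
  linarith [hreal]

lemma contOn_rpow (c : ℝ) : ContinuousOn (fun t : ℝ => t ^ c) (Ioo 0 1) := fun t ht =>
  (Real.continuousAt_rpow_const t c (Or.inl ht.1.ne')).continuousWithinAt

lemma contOn_one_sub_rpow (c : ℝ) : ContinuousOn (fun t : ℝ => (1 - t) ^ c) (Ioo 0 1) :=
  fun t ht => (ContinuousAt.rpow_const (continuousAt_const.sub continuousAt_id)
    (Or.inl (sub_pos.mpr ht.2).ne')).continuousWithinAt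

lemma my_integrable_of_le {f : ℝ → ℝ} {a b : ℝ} (ha : 0 < a) (hb : 0 < b)
    (hf : ContinuousOn f (Ioo 0 1))
    (hle : ∀ t ∈ Ioo (0:ℝ) 1, |f t| ≤ t ^ (a - 1) * (1 - t) ^ (b - 1)) :
    IntegrableOn f (Ioo (0:ℝ) 1) := by
  refine Integrable.mono' (my_beta_integrable ha hb)
    (hf.aestronglyMeasurable measurableSet_Ioo) ?_
  filter_upwards [ae_restrict_mem measurableSet_Ioo] with t ht
  simpa using hle t ht

lemma tendsto_slope_rpow (p : ℝ) :
    Tendsto (fun t : ℝ => (1 - t ^ p) / (1 - t)) (nhdsWithin 1 (Iio 1)) (nhds p) := by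
  have hd : HasDerivAt (fun x : ℝ => x ^ p) (p * (1:ℝ) ^ (p - 1)) 1 :=
    Real.hasDerivAt_rpow_const (Or.inl one_ne_zero)
  rw [Real.one_rpow, mul_one] at hd
  have := hasDerivAt_iff_tendsto_slope.mp hd
  have h2 : Tendsto (slope (fun x : ℝ => x ^ p) 1) (nhdsWithin 1 (Iio 1)) (nhds p) :=
    this.mono_left (nhdsWithin_mono 1 (fun x hx => ne_of_lt hx))
  refine h2.congr' ?_
  filter_upwards [self_mem_nhdsWithin] with t (ht : t < 1)
  rw [slope_def_field]
  rw [div_eq_div_iff (by linarith) (by linarith)]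
  simp [Real.one_rpow]; ring

lemma tendsto_rpow_zero_right {c : ℝ} (hc : 0 < c) :
    Tendsto (fun t : ℝ => t ^ c) (nhdsWithin 0 (Ioi 0)) (nhds 0) := by
  have : ContinuousAt (fun t : ℝ => t ^ c) 0 := Real.continuousAt_rpow_const 0 c (Or.inr hc.le)
  have h := this.continuousWithinAt (s := Ioi 0)
  simpa [ContinuousWithinAt, Real.zero_rpow hc.ne'] using h

lemma tendsto_one_sub_rpow_zero_right (c : ℝ) :
    Tendsto (fun t : ℝ => (1 - t) ^ c) (nhdsWithin 0 (Ioi 0)) (nhds 1) := by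
  have hca : ContinuousAt (fun t : ℝ => (1 - t) ^ c) 0 := by
    refine ContinuousAt.rpow_const (continuousAt_const.sub continuousAt_id) (Or.inl ?_)
    simp
  have h := hca.continuousWithinAt (s := Ioi 0)
  simpa [ContinuousWithinAt, Real.one_rpow] using h

lemma tendsto_one_sub_rpow_one_left {c : ℝ} (hc : 0 < c) :
    Tendsto (fun t : ℝ => (1 - t) ^ c) (nhdsWithin 1 (Iio 1)) (nhds 0) := by
  have h1 : Tendsto (fun t : ℝ => 1 - t) (nhdsWithin 1 (Iio 1)) (nhdsWithin 0 (Ioi 0)) := by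
    rw [tendsto_nhdsWithin_iff]
    constructor
    · have : Tendsto (fun t : ℝ => 1 - t) (nhds 1) (nhds 0) := by
        have := (continuous_const.sub continuous_id (f := fun t : ℝ => (1:ℝ))).tendsto 1
        simpa [Pi.sub_def] using this
      exact this.mono_left nhdsWithin_le_nhds
    · filter_upwards [self_mem_nhdsWithin] with t (ht : t < 1)
      simpa using ht
  exact (tendsto_rpow_zero_right hc).comp h1

lemma tendsto_rpow_one_left (c : ℝ) :
    Tendsto (fun t : ℝ => t ^ c) (nhdsWithin 1 (Iio 1)) (nhds 1) := by
  have : ContinuousAt (fun t : ℝ => t ^ c) 1 := Real.continuousAt_rpow_const 1 c (Or.inl one_ne_zero)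
  have h := this.continuousWithinAt (s := Iio 1)
  simpa [ContinuousWithinAt, Real.one_rpow] using h

-- derivative helpers
lemma hasDerivAt_one_sub_rpow {c t : ℝ} (ht : t < 1) :
    HasDerivAt (fun t : ℝ => (1 - t) ^ c) (-(c * (1 - t) ^ (c - 1))) t := by
  have hin : HasDerivAt (fun t : ℝ => 1 - t) (-1) t := by
    simpa using (hasDerivAt_id t).const_sub 1
  have hout : HasDerivAt (fun x : ℝ => x ^ c) (c * (1 - t) ^ (c - 1)) (1 - t) :=
    Real.hasDerivAt_rpow_const (Or.inl (by linarith))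
  simpa [mul_comm, Function.comp_def] using hout.comp t hin

lemma hasDerivAt_rpow' {s t : ℝ} (ht : 0 < t) :
    HasDerivAt (fun t : ℝ => t ^ s) (s * t ^ (s - 1)) t :=
  Real.hasDerivAt_rpow_const (Or.inl ht.ne')

theorem F_gt_one {α : ℝ} (hα1 : 1 < α) (hα2 : α < 2) :
    ∫ t in Ioo (0:ℝ) 1,
        (1 - t ^ ((α-1)/2)) * (1 - t ^ ((α-1)/2)) * (1-t) ^ (-1-α)
      = -(1/α) + ((α-1)/2/α) * eulerBeta ((α-1)/2) (2-α) := by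
  set p : ℝ := (α-1)/2 with hp_def
  have hα0 : 0 < α := by linarith
  have hp0 : 0 < p := by rw [hp_def]; linarith
  have hp1 : p ≤ 1 := by rw [hp_def]; linarith
  have h2p : 2*p = α - 1 := by rw [hp_def]; ring
  -- basic facts on Ioo
  have facts : ∀ t ∈ Ioo (0:ℝ) 1, 0 < t ∧ t < 1 ∧ 0 < 1 - t ∧ 0 < t ^ p ∧ t ^ p ≤ 1 ∧
      t ≤ t ^ p ∧ 0 < t^(p-1) ∧ 0 < t^(2*p-1) := by
    intro t ht
    obtain ⟨ht0, ht1⟩ := ht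
    refine ⟨ht0, ht1, by linarith, Real.rpow_pos_of_pos ht0 p,
      Real.rpow_le_one ht0.le ht1.le hp0.le, ?_, Real.rpow_pos_of_pos ht0 _,
      Real.rpow_pos_of_pos ht0 _⟩
    calc t = t ^ (1:ℝ) := (Real.rpow_one t).symm
    _ ≤ t ^ p := Real.rpow_le_rpow_of_exponent_ge ht0 ht1.le hp1
  -- integrability of main integrand f₀
  have intF : IntegrableOn (fun t : ℝ => (1 - t^p) * (1 - t^p) * (1-t)^(-1-α)) (Ioo 0 1) := by
    refine my_integrable_of_le (a := 1) (b := 2 - α) one_pos (by linarith) ?_ ?_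
    · exact ((continuousOn_const.sub (contOn_rpow p)).mul
        (continuousOn_const.sub (contOn_rpow p))).mul (contOn_one_sub_rpow _)
    · intro t ht
      obtain ⟨ht0, ht1, h1t, htp, htp1, http, _, _⟩ := facts t ht
      have hA : (0:ℝ) < (1-t)^(-1-α) := Real.rpow_pos_of_pos h1t _
      have eq1 : t ^ ((1:ℝ)-1) * (1-t) ^ ((2-α)-1) = (1-t) * ((1-t) * (1-t)^(-1-α)) := by
        rw [show ((1:ℝ)-1) = 0 by ring, Real.rpow_zero, one_mul,
          show ((2:ℝ)-α)-1 = 1 + (1 + (-1-α)) by ring, Real.rpow_add h1t,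
          Real.rpow_add h1t, Real.rpow_one]
      have hb' : 1 - t^p ≤ 1 - t := by linarith
      rw [eq1, abs_of_nonneg (mul_nonneg (mul_nonneg (by linarith) (by linarith)) hA.le)]
      nlinarith [mul_le_mul_of_nonneg_right (mul_le_mul hb' hb' (by linarith) (by linarith)) hA.le]
  -- integrability of g
  have intG : IntegrableOn (fun t : ℝ => t^(p-1) * (1 - t^p) * (1-t)^(-α)) (Ioo 0 1) := by
    refine my_integrable_of_le (a := p) (b := 2 - α) hp0 (by linarith) ?_ ?_
    · exact ((contOn_rpow _).mul (continuousOn_const.sub (contOn_rpow p))).mul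
        (contOn_one_sub_rpow _)
    · intro t ht
      obtain ⟨ht0, ht1, h1t, htp, htp1, http, htpm, _⟩ := facts t ht
      have hA : (0:ℝ) < (1-t)^(-α) := Real.rpow_pos_of_pos h1t _
      have eq1 : t ^ (p-1) * (1-t) ^ ((2-α)-1) = t^(p-1) * ((1-t) * (1-t)^(-α)) := by
        rw [show ((2:ℝ)-α)-1 = 1 + -α by ring, Real.rpow_add h1t, Real.rpow_one]
      have hb' : 1 - t^p ≤ 1 - t := by linarith
      rw [eq1, abs_of_nonneg (mul_nonneg (mul_nonneg htpm.le (by linarith)) hA.le)]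
      nlinarith [mul_le_mul_of_nonneg_right (mul_le_mul_of_nonneg_left hb' htpm.le) hA.le]
  -- integrability of k
  have intK : IntegrableOn (fun t : ℝ => (t^p - t^(2*p)) * (1-t)^(-α)) (Ioo 0 1) := by
    refine my_integrable_of_le (a := 1) (b := 2 - α) one_pos (by linarith) ?_ ?_
    · exact (((contOn_rpow _).sub (contOn_rpow _))).mul (contOn_one_sub_rpow _)
    · intro t ht
      obtain ⟨ht0, ht1, h1t, htp, htp1, http, _, _⟩ := facts t ht
      have hA : (0:ℝ) < (1-t)^(-α) := Real.rpow_pos_of_pos h1t _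
      have h2p' : t^(2*p) = t^p * t^p := by
        rw [show 2*p = p + p by ring, Real.rpow_add ht0]
      have eq1 : t ^ ((1:ℝ)-1) * (1-t) ^ ((2-α)-1) = (1-t) * (1-t)^(-α) := by
        rw [show ((1:ℝ)-1) = 0 by ring, Real.rpow_zero, one_mul,
          show ((2:ℝ)-α)-1 = 1 + -α by ring, Real.rpow_add h1t, Real.rpow_one]
      have h5 : t^p * (1 - t^p) ≤ 1 - t := by nlinarith
      rw [eq1, h2p', abs_of_nonneg (mul_nonneg (by nlinarith) hA.le)]
      nlinarith [mul_le_mul_of_nonneg_right h5 hA.le]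
  -- Beta integrands
  have intB1 : IntegrableOn (fun t : ℝ => t^(p-1) * (1-t)^(1-α)) (Ioo 0 1) := by
    have := my_beta_integrable (a := p) (b := 2-α) hp0 (by linarith)
    simpa [show (2:ℝ)-α-1 = 1-α by ring] using this
  have intB2 : IntegrableOn (fun t : ℝ => t^(2*p-1) * (1-t)^(1-α)) (Ioo 0 1) := by
    have := my_beta_integrable (a := 2*p) (b := 2-α) (by linarith) (by linarith)
    simpa [show (2:ℝ)-α-1 = 1-α by ring] using this
  -- FTC 1 : G = (1/α)(1-t^p)²(1-t)^(-α)
  have hG : ∀ t ∈ Ioo (0:ℝ) 1,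
      HasDerivAt (fun t : ℝ => (1/α) * ((1 - t^p) * (1 - t^p) * (1-t)^(-α)))
        ((1 - t^p) * (1 - t^p) * (1-t)^(-1-α)
          - (2*p/α) * (t^(p-1) * (1 - t^p) * (1-t)^(-α))) t := by
    intro t ht
    obtain ⟨ht0, ht1, h1t, htp, htp1, http, htpm, htpm2⟩ := facts t ht
    have hA := (hasDerivAt_rpow' (s := p) ht0).const_sub 1
    have hB := hasDerivAt_one_sub_rpow (c := -α) ht1
    have h := ((hA.mul hA).mul hB).const_mul (1/α)
    refine h.congr_deriv ?_
    simp only [Pi.mul_apply]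
    have hZ : (1-t) * (1-t)^(-α-1) = (1-t)^(-α) := by
      rw [Real.rpow_sub h1t, Real.rpow_one]
      field_simp
    rw [show (-1-α:ℝ) = -α-1 by ring, ← hZ]
    field_simp
    ring
  have hL0 : Tendsto (fun t : ℝ => (1/α) * ((1 - t^p) * (1 - t^p) * (1-t)^(-α)))
      (nhdsWithin 0 (Ioi 0)) (nhds (1/α)) := by
    have h1 := tendsto_rpow_zero_right hp0
    have h2 := tendsto_one_sub_rpow_zero_right (-α)
    have := (((tendsto_const_nhds (x := (1:ℝ))).sub h1).mul
      ((tendsto_const_nhds (x := (1:ℝ))).sub h1)).mul h2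
    have h3 := (tendsto_const_nhds (x := 1/α)).mul this
    simpa using h3
  have hL1 : Tendsto (fun t : ℝ => (1/α) * ((1 - t^p) * (1 - t^p) * (1-t)^(-α)))
      (nhdsWithin 1 (Iio 1)) (nhds 0) := by
    have h1 := tendsto_slope_rpow p
    have h2 := tendsto_one_sub_rpow_one_left (c := 2 - α) (by linarith)
    have h3 := (tendsto_const_nhds (x := 1/α)).mul ((h1.mul h1).mul h2)
    have h4 : (1/α) * ((p * p) * 0) = 0 := by ring
    rw [h4] at h3
    refine h3.congr' ?_
    filter_upwards [self_mem_nhdsWithin] with t (ht : t < 1)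
    have h1t : (0:ℝ) < 1 - t := by linarith
    have hZ : (1-t)^(2-α : ℝ) = (1-t) * ((1-t) * (1-t)^(-α)) := by
      rw [show (2-α:ℝ) = 1 + (1 + -α) by ring, Real.rpow_add h1t, Real.rpow_add h1t,
        Real.rpow_one]
    rw [hZ]
    field_simp
  have ftc1 := my_ftc_Ioo hG (intF.sub (intG.const_mul (2*p/α))) hL0 hL1
  rw [integral_sub intF (intG.const_mul (2*p/α)), integral_const_mul] at ftc1
  -- FTC 2 : H = (1/(α-1))(t^p - t^{2p})(1-t)^{1-α}
  have hH : ∀ t ∈ Ioo (0:ℝ) 1,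
      HasDerivAt (fun t : ℝ => (1/(α-1)) * ((t^p - t^(2*p)) * (1-t)^(1-α)))
        ((t^p - t^(2*p)) * (1-t)^(-α)
          + (1/(α-1)) * (p * (t^(p-1) * (1-t)^(1-α)) - 2*p * (t^(2*p-1) * (1-t)^(1-α)))) t := by
    intro t ht
    obtain ⟨ht0, ht1, h1t, htp, htp1, http, htpm, htpm2⟩ := facts t ht
    have hA := (hasDerivAt_rpow' (s := p) ht0).sub (hasDerivAt_rpow' (s := 2*p) ht0)
    have hB := hasDerivAt_one_sub_rpow (c := 1-α) ht1
    have h := (hA.mul hB).const_mul (1/(α-1))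
    refine h.congr_deriv ?_
    simp only [Pi.sub_apply]
    rw [show (1-α-1:ℝ) = -α by ring]
    have hne : α - 1 ≠ 0 := by linarith
    field_simp
    ring
  have hL0' : Tendsto (fun t : ℝ => (1/(α-1)) * ((t^p - t^(2*p)) * (1-t)^(1-α)))
      (nhdsWithin 0 (Ioi 0)) (nhds 0) := by
    have h1 := tendsto_rpow_zero_right hp0
    have h1' := tendsto_rpow_zero_right (c := 2*p) (by linarith)
    have h2 := tendsto_one_sub_rpow_zero_right (1-α)
    have h3 := (tendsto_const_nhds (x := 1/(α-1))).mul ((h1.sub h1').mul h2)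
    simpa using h3
  have hL1' : Tendsto (fun t : ℝ => (1/(α-1)) * ((t^p - t^(2*p)) * (1-t)^(1-α)))
      (nhdsWithin 1 (Iio 1)) (nhds 0) := by
    have h1 := tendsto_slope_rpow p
    have h2 := tendsto_one_sub_rpow_one_left (c := 2 - α) (by linarith)
    have h0 := tendsto_rpow_one_left p
    have h3 := (tendsto_const_nhds (x := 1/(α-1))).mul ((h0.mul h1).mul h2)
    have h4 : (1/(α-1)) * ((1 * p) * 0) = 0 := by ring
    rw [h4] at h3
    refine h3.congr' ?_
    filter_upwards [self_mem_nhdsWithin, (eventually_gt_nhds one_pos).filter_mono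
      nhdsWithin_le_nhds] with t (ht : t < 1) (ht0 : (0:ℝ) < t)
    have h1t : (0:ℝ) < 1 - t := by linarith
    have hY2 : t^(2*p) = t^p * t^p := by
      rw [show 2*p = p + p by ring, Real.rpow_add ht0]
    have hZ : (1-t)^(2-α : ℝ) = (1-t) * (1-t)^(1-α) := by
      rw [show (2-α:ℝ) = 1 + (1-α) by ring, Real.rpow_add h1t, Real.rpow_one]
    rw [hZ, hY2]
    have hne1 : (1:ℝ) - t ≠ 0 := ne_of_gt h1t
    have hne2 : α - 1 ≠ 0 := ne_of_gt (by linarith)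
    field_simp
  have intB1' : IntegrableOn (fun t : ℝ => p * (t^(p-1) * (1-t)^(1-α))
      - 2*p * (t^(2*p-1) * (1-t)^(1-α))) (Ioo 0 1) :=
    (intB1.const_mul p).sub (intB2.const_mul (2*p))
  have ftc2 := my_ftc_Ioo hH (intK.add (intB1'.const_mul (1/(α-1)))) hL0' hL1'
  rw [integral_add intK (intB1'.const_mul (1/(α-1))), integral_const_mul,
    integral_sub (intB1.const_mul p) (intB2.const_mul (2*p)),
    integral_const_mul, integral_const_mul, sub_zero] at ftc2
  -- Beta evaluations
  have hB1 : ∫ t in Ioo (0:ℝ) 1, t^(p-1) * (1-t)^(1-α) = eulerBeta p (2-α) := by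
    have := my_beta_eval (a := p) (b := 2-α) hp0 (by linarith)
    simpa [show (2:ℝ)-α-1 = 1-α by ring] using this
  have hB2 : ∫ t in Ioo (0:ℝ) 1, t^(2*p-1) * (1-t)^(1-α) = eulerBeta (2*p) (2-α) := by
    have := my_beta_eval (a := 2*p) (b := 2-α) (by linarith) (by linarith)
    simpa [show (2:ℝ)-α-1 = 1-α by ring] using this
  -- J split
  have hJ : ∫ t in Ioo (0:ℝ) 1, t^(p-1) * (1 - t^p) * (1-t)^(-α)
      = (∫ t in Ioo (0:ℝ) 1, (t^(p-1) * (1-t)^(1-α) - t^(2*p-1) * (1-t)^(1-α)))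
        + ∫ t in Ioo (0:ℝ) 1, (t^p - t^(2*p)) * (1-t)^(-α) := by
    have intSub : IntegrableOn
        (fun t : ℝ => t^(p-1) * (1-t)^(1-α) - t^(2*p-1) * (1-t)^(1-α)) (Ioo 0 1) :=
      intB1.sub intB2
    rw [← integral_add intSub intK]
    refine setIntegral_congr_fun measurableSet_Ioo (fun t ht => ?_)
    obtain ⟨ht0, ht1, h1t, htp, htp1, http, htpm, htpm2⟩ := facts t ht
    have hX : t^(p-1) * t^p = t^(2*p-1) := by
      rw [← Real.rpow_add ht0, show p-1+p = 2*p-1 by ring]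
    have hXt : t^(p-1) * t = t^p := by
      nth_rewrite 2 [show t = t^(1:ℝ) by rw [Real.rpow_one]]
      rw [← Real.rpow_add ht0, show p-1+1 = p by ring]
    have hX2t : t^(2*p-1) * t = t^(2*p) := by
      nth_rewrite 2 [show t = t^(1:ℝ) by rw [Real.rpow_one]]
      rw [← Real.rpow_add ht0, show 2*p-1+1 = 2*p by ring]
    have hZ : (1-t)^(1-α : ℝ) = (1-t) * (1-t)^(-α) := by
      rw [show (1-α:ℝ) = 1 + -α by ring, Real.rpow_add h1t, Real.rpow_one]
    simp only [hZ]
    linear_combination (-(1-t)^(-α)) * hX + ((1-t)^(-α)) * hXt - ((1-t)^(-α)) * hX2t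
  rw [integral_sub intB1 intB2, hB1, hB2] at hJ
  -- assemble
  rw [hB1, hB2, ← h2p] at ftc2
  have hpne : p ≠ 0 := hp0.ne'
  have hαne : α ≠ 0 := hα0.ne'
  have e : (1/(2*p)) * (p * eulerBeta p (2-α) - 2*p * eulerBeta (2*p) (2-α))
      = eulerBeta p (2-α)/2 - eulerBeta (2*p) (2-α) := by
    field_simp
  rw [e] at ftc2
  have hK : (∫ t in Ioo (0:ℝ) 1, (t^p - t^(2*p)) * (1-t)^(-α))
      = eulerBeta (2*p) (2-α) - eulerBeta p (2-α)/2 := by linarith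
  have hY : (∫ t in Ioo (0:ℝ) 1, t^(p-1) * (1 - t^p) * (1-t)^(-α))
      = eulerBeta p (2-α)/2 := by rw [hJ, hK]; ring
  rw [hY] at ftc1
  linear_combination ftc1

theorem F_lt_one {α : ℝ} (hα0 : 0 < α) (hα1 : α < 1) :
    ∫ t in Ioo (0:ℝ) 1,
        (1 - t ^ ((α-1)/2)) * (1 - t ^ ((α-1)/2)) * (1-t) ^ (-1-α)
      = -(1/α) + ((1-α)/α) * eulerBeta ((α+1)/2) (1-α) := by
  set p : ℝ := (α-1)/2 with hp_def
  set q : ℝ := (α+1)/2 with hq_def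
  have hp0 : p < 0 := by rw [hp_def]; linarith
  have hpm : -1/2 < p := by rw [hp_def]; linarith
  have hq0 : 0 < q := by rw [hq_def]; linarith
  have hq1 : q ≤ 1 := by rw [hq_def]; linarith
  have hqp : q - 1 = p := by rw [hq_def, hp_def]; ring
  have facts : ∀ t ∈ Ioo (0:ℝ) 1, 0 < t ∧ t < 1 ∧ 0 < 1 - t ∧ 0 < t ^ p ∧ 1 ≤ t ^ p ∧
      t ^ p - 1 ≤ t ^ p * (1 - t) ∧ 0 < t ^ q ∧ t ^ q ≤ 1 ∧ t ≤ t ^ q := by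
    intro t ht
    obtain ⟨ht0, ht1⟩ := ht
    have htp : 0 < t ^ p := Real.rpow_pos_of_pos ht0 p
    have htp1 : 1 ≤ t ^ p :=
      Real.one_le_rpow_of_pos_of_le_one_of_nonpos ht0 ht1.le hp0.le
    have hmp : t ≤ t ^ (-p) := by
      calc t = t ^ (1:ℝ) := (Real.rpow_one t).symm
      _ ≤ t ^ (-p) := Real.rpow_le_rpow_of_exponent_ge ht0 ht1.le (by linarith)
    have hpp : t ^ p * t ^ (-p) = 1 := by
      rw [← Real.rpow_add ht0]; simp
    refine ⟨ht0, ht1, by linarith, htp, htp1, by nlinarith, Real.rpow_pos_of_pos ht0 q,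
      Real.rpow_le_one ht0.le ht1.le hq0.le, ?_⟩
    calc t = t ^ (1:ℝ) := (Real.rpow_one t).symm
    _ ≤ t ^ q := Real.rpow_le_rpow_of_exponent_ge ht0 ht1.le hq1
  -- integrability
  have intF : IntegrableOn (fun t : ℝ => (1 - t^p) * (1 - t^p) * (1-t)^(-1-α)) (Ioo 0 1) := by
    refine my_integrable_of_le (a := α) (b := 2 - α) hα0 (by linarith) ?_ ?_
    · exact ((continuousOn_const.sub (contOn_rpow p)).mul
        (continuousOn_const.sub (contOn_rpow p))).mul (contOn_one_sub_rpow _)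
    · intro t ht
      obtain ⟨ht0, ht1, h1t, htp, htp1, htpb, htq, htq1, htqq⟩ := facts t ht
      have hA : (0:ℝ) < (1-t)^(-1-α) := Real.rpow_pos_of_pos h1t _
      have hPP : t^(α-1) = t^p * t^p := by
        rw [show α-1 = p+p by rw [hp_def]; ring, Real.rpow_add ht0]
      have eq1 : t ^ (α-1) * (1-t) ^ ((2-α)-1) = (t^p*(1-t)) * ((t^p*(1-t)) * (1-t)^(-1-α)) := by
        rw [show ((2:ℝ)-α)-1 = 1 + (1 + (-1-α)) by ring, Real.rpow_add h1t,
          Real.rpow_add h1t, Real.rpow_one, hPP]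
        ring
      rw [eq1, abs_of_nonneg (mul_nonneg
        (by nlinarith : (0:ℝ) ≤ (1 - t^p) * (1 - t^p)) hA.le)]
      nlinarith [mul_le_mul_of_nonneg_right (mul_le_mul htpb htpb
        (by linarith : (0:ℝ) ≤ t^p - 1) (by nlinarith : (0:ℝ) ≤ t^p * (1-t))) hA.le]
  have intA : IntegrableOn (fun t : ℝ => (1 - t^(α-1)) * (1-t)^(-1-α)) (Ioo 0 1) := by
    refine my_integrable_of_le (a := α) (b := 1 - α) hα0 (by linarith) ?_ ?_
    · exact (continuousOn_const.sub (contOn_rpow _)).mul (contOn_one_sub_rpow _)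
    · intro t ht
      obtain ⟨ht0, ht1, h1t, htp, htp1, htpb, htq, htq1, htqq⟩ := facts t ht
      have hA : (0:ℝ) < (1-t)^(-1-α) := Real.rpow_pos_of_pos h1t _
      have hPP : t^(α-1) = t^p * t^p := by
        rw [show α-1 = p+p by rw [hp_def]; ring, Real.rpow_add ht0]
      have hb2 : t^(α-1) - 1 ≤ t^(α-1) * (1-t) := by
        have hmp : t ≤ t ^ (1-α) := by
          calc t = t ^ (1:ℝ) := (Real.rpow_one t).symm
          _ ≤ t ^ (1-α) := Real.rpow_le_rpow_of_exponent_ge ht0 ht1.le (by linarith)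
        have hpp : t ^ (α-1) * t ^ (1-α) = 1 := by
          rw [← Real.rpow_add ht0]; simp
        nlinarith [Real.rpow_pos_of_pos ht0 (α-1)]
      have htam : 1 ≤ t^(α-1) := Real.one_le_rpow_of_pos_of_le_one_of_nonpos ht0 ht1.le
        (by linarith)
      have eq1 : t ^ (α-1) * (1-t) ^ ((1-α)-1) = (t^(α-1)*(1-t)) * (1-t)^(-1-α) := by
        rw [show ((1:ℝ)-α)-1 = 1 + (-1-α) by ring, Real.rpow_add h1t, Real.rpow_one]
        ring
      rw [eq1, abs_mul, abs_of_pos hA, abs_of_nonpos (by nlinarith)]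
      nlinarith [mul_le_mul_of_nonneg_right hb2 hA.le]
  have intQ : IntegrableOn (fun t : ℝ => (1 - t^q) * (1-t)^(-1-α)) (Ioo 0 1) := by
    refine my_integrable_of_le (a := 1) (b := 1 - α) one_pos (by linarith) ?_ ?_
    · exact (continuousOn_const.sub (contOn_rpow _)).mul (contOn_one_sub_rpow _)
    · intro t ht
      obtain ⟨ht0, ht1, h1t, htp, htp1, htpb, htq, htq1, htqq⟩ := facts t ht
      have hA : (0:ℝ) < (1-t)^(-1-α) := Real.rpow_pos_of_pos h1t _
      have eq1 : t ^ ((1:ℝ)-1) * (1-t) ^ ((1-α)-1) = (1-t) * (1-t)^(-1-α) := by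
        rw [show ((1:ℝ)-1) = 0 by ring, Real.rpow_zero, one_mul,
          show ((1:ℝ)-α)-1 = 1 + (-1-α) by ring, Real.rpow_add h1t, Real.rpow_one]
      rw [eq1, abs_of_nonneg (mul_nonneg (by linarith) hA.le)]
      nlinarith [mul_le_mul_of_nonneg_right (show 1 - t^q ≤ 1 - t by linarith) hA.le]
  have intP : IntegrableOn (fun t : ℝ => (1 - t^p) * (1-t)^(-1-α)) (Ioo 0 1) := by
    refine my_integrable_of_le (a := q) (b := 1 - α) hq0 (by linarith) ?_ ?_
    · exact (continuousOn_const.sub (contOn_rpow _)).mul (contOn_one_sub_rpow _)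
    · intro t ht
      obtain ⟨ht0, ht1, h1t, htp, htp1, htpb, htq, htq1, htqq⟩ := facts t ht
      have hA : (0:ℝ) < (1-t)^(-1-α) := Real.rpow_pos_of_pos h1t _
      have hq1t : t^(q-1) = t^p := by rw [hqp]
      have eq1 : t ^ (q-1) * (1-t) ^ ((1-α)-1) = (t^p*(1-t)) * (1-t)^(-1-α) := by
        rw [show ((1:ℝ)-α)-1 = 1 + (-1-α) by ring, Real.rpow_add h1t, Real.rpow_one, hq1t]
        ring
      rw [eq1, abs_mul, abs_of_pos hA, abs_of_nonpos (by nlinarith)]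
      nlinarith [mul_le_mul_of_nonneg_right htpb hA.le]
  have intBq : IntegrableOn (fun t : ℝ => t^(q-1) * (1-t)^(-α)) (Ioo 0 1) := by
    have := my_beta_integrable (a := q) (b := 1-α) hq0 (by linarith)
    simpa [show (1:ℝ)-α-1 = -α by ring] using this
  -- FTC A : G₁ = (1/α)(1-t^α)(1-t)^(-α), deriv = (1-t^(α-1))(1-t)^(-1-α)
  have hGA : ∀ t ∈ Ioo (0:ℝ) 1,
      HasDerivAt (fun t : ℝ => (1/α) * ((1 - t^α) * (1-t)^(-α)))
        ((1 - t^(α-1)) * (1-t)^(-1-α)) t := by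
    intro t ht
    obtain ⟨ht0, ht1, h1t, htp, htp1, htpb, htq, htq1, htqq⟩ := facts t ht
    have hA := (hasDerivAt_rpow' (s := α) ht0).const_sub 1
    have hB := hasDerivAt_one_sub_rpow (c := -α) ht1
    have h := (hA.mul hB).const_mul (1/α)
    refine h.congr_deriv ?_
    have hZ : (1-t) * (1-t)^(-α-1) = (1-t)^(-α) := by
      rw [Real.rpow_sub h1t, Real.rpow_one]; field_simp
    have hUt : t^(α-1) * t = t^α := by
      nth_rewrite 2 [show t = t^(1:ℝ) by rw [Real.rpow_one]]
      rw [← Real.rpow_add ht0, show α-1+1 = α by ring]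
    rw [show (-1-α:ℝ) = -α-1 by ring, ← hZ, ← hUt]
    have hαne : α ≠ 0 := hα0.ne'
    field_simp
    ring
  have hLA0 : Tendsto (fun t : ℝ => (1/α) * ((1 - t^α) * (1-t)^(-α)))
      (nhdsWithin 0 (Ioi 0)) (nhds (1/α)) := by
    have h1 := tendsto_rpow_zero_right hα0
    have h2 := tendsto_one_sub_rpow_zero_right (-α)
    have h3 := (tendsto_const_nhds (x := 1/α)).mul
      (((tendsto_const_nhds (x := (1:ℝ))).sub h1).mul h2)
    simpa using h3
  have hLA1 : Tendsto (fun t : ℝ => (1/α) * ((1 - t^α) * (1-t)^(-α)))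
      (nhdsWithin 1 (Iio 1)) (nhds 0) := by
    have h1 := tendsto_slope_rpow α
    have h2 := tendsto_one_sub_rpow_one_left (c := 1 - α) (by linarith)
    have h3 := (tendsto_const_nhds (x := 1/α)).mul (h1.mul h2)
    have h4 : (1/α) * (α * 0) = 0 := by ring
    rw [h4] at h3
    refine h3.congr' ?_
    filter_upwards [self_mem_nhdsWithin] with t (ht : t < 1)
    have h1t : (0:ℝ) < 1 - t := by linarith
    have hne1 : (1:ℝ) - t ≠ 0 := ne_of_gt h1t
    have hZ : (1-t)^(1-α : ℝ) = (1-t) * (1-t)^(-α) := by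
      rw [show (1-α:ℝ) = 1 + -α by ring, Real.rpow_add h1t, Real.rpow_one]
    rw [hZ]
    field_simp
  have ftcA := my_ftc_Ioo hGA intA hLA0 hLA1
  -- FTC B : G₂ = (1/α)(1-t^q)(1-t)^(-α)
  have hGB : ∀ t ∈ Ioo (0:ℝ) 1,
      HasDerivAt (fun t : ℝ => (1/α) * ((1 - t^q) * (1-t)^(-α)))
        ((1 - t^q) * (1-t)^(-1-α) - (q/α) * (t^(q-1) * (1-t)^(-α))) t := by
    intro t ht
    obtain ⟨ht0, ht1, h1t, htp, htp1, htpb, htq, htq1, htqq⟩ := facts t ht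
    have hA := (hasDerivAt_rpow' (s := q) ht0).const_sub 1
    have hB := hasDerivAt_one_sub_rpow (c := -α) ht1
    have h := (hA.mul hB).const_mul (1/α)
    refine h.congr_deriv ?_
    have hZ : (1-t) * (1-t)^(-α-1) = (1-t)^(-α) := by
      rw [Real.rpow_sub h1t, Real.rpow_one]; field_simp
    rw [show (-1-α:ℝ) = -α-1 by ring, ← hZ]
    have hαne : α ≠ 0 := hα0.ne'
    field_simp
    ring
  have hLB0 : Tendsto (fun t : ℝ => (1/α) * ((1 - t^q) * (1-t)^(-α)))
      (nhdsWithin 0 (Ioi 0)) (nhds (1/α)) := by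
    have h1 := tendsto_rpow_zero_right hq0
    have h2 := tendsto_one_sub_rpow_zero_right (-α)
    have h3 := (tendsto_const_nhds (x := 1/α)).mul
      (((tendsto_const_nhds (x := (1:ℝ))).sub h1).mul h2)
    simpa using h3
  have hLB1 : Tendsto (fun t : ℝ => (1/α) * ((1 - t^q) * (1-t)^(-α)))
      (nhdsWithin 1 (Iio 1)) (nhds 0) := by
    have h1 := tendsto_slope_rpow q
    have h2 := tendsto_one_sub_rpow_one_left (c := 1 - α) (by linarith)
    have h3 := (tendsto_const_nhds (x := 1/α)).mul (h1.mul h2)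
    have h4 : (1/α) * (q * 0) = 0 := by ring
    rw [h4] at h3
    refine h3.congr' ?_
    filter_upwards [self_mem_nhdsWithin] with t (ht : t < 1)
    have h1t : (0:ℝ) < 1 - t := by linarith
    have hne1 : (1:ℝ) - t ≠ 0 := ne_of_gt h1t
    have hZ : (1-t)^(1-α : ℝ) = (1-t) * (1-t)^(-α) := by
      rw [show (1-α:ℝ) = 1 + -α by ring, Real.rpow_add h1t, Real.rpow_one]
    rw [hZ]
    field_simp
  have ftcB := my_ftc_Ioo hGB (intQ.sub (intBq.const_mul (q/α))) hLB0 hLB1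
  rw [integral_sub intQ (intBq.const_mul (q/α)), integral_const_mul] at ftcB
  -- Beta evaluation
  have hBq : ∫ t in Ioo (0:ℝ) 1, t^(q-1) * (1-t)^(-α) = eulerBeta q (1-α) := by
    have := my_beta_eval (a := q) (b := 1-α) hq0 (by linarith)
    simpa [show (1:ℝ)-α-1 = -α by ring] using this
  -- split 1 : fP = fQ - beta integrand
  have hSplit1 : ∫ t in Ioo (0:ℝ) 1, (1 - t^p) * (1-t)^(-1-α)
      = (∫ t in Ioo (0:ℝ) 1, (1 - t^q) * (1-t)^(-1-α))
        - ∫ t in Ioo (0:ℝ) 1, t^(q-1) * (1-t)^(-α) := by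
    rw [← integral_sub intQ intBq]
    refine setIntegral_congr_fun measurableSet_Ioo (fun t ht => ?_)
    obtain ⟨ht0, ht1, h1t, htp, htp1, htpb, htq, htq1, htqq⟩ := facts t ht
    have hq1t : t^(q-1) = t^p := by rw [hqp]
    have hPt : t^p * t = t^q := by
      nth_rewrite 2 [show t = t^(1:ℝ) by rw [Real.rpow_one]]
      rw [← Real.rpow_add ht0, show p+1 = q by rw [hp_def, hq_def]; ring]
    have hZ : (1-t)^(-α : ℝ) = (1-t) * (1-t)^(-1-α) := by
      rw [show (-α:ℝ) = 1 + (-1-α) by ring, Real.rpow_add h1t, Real.rpow_one]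
    simp only [hZ, hq1t]
    rw [← hPt]
    ring
  -- split 2 : f₀ = 2 fP - fA
  have hSplit2 : ∫ t in Ioo (0:ℝ) 1, (1 - t^p) * (1 - t^p) * (1-t)^(-1-α)
      = 2 * (∫ t in Ioo (0:ℝ) 1, (1 - t^p) * (1-t)^(-1-α))
        - ∫ t in Ioo (0:ℝ) 1, (1 - t^(α-1)) * (1-t)^(-1-α) := by
    rw [← integral_const_mul, ← integral_sub (intP.const_mul 2) intA]
    refine setIntegral_congr_fun measurableSet_Ioo (fun t ht => ?_)
    obtain ⟨ht0, ht1, h1t, htp, htp1, htpb, htq, htq1, htqq⟩ := facts t ht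
    have hPP : t^(α-1) = t^p * t^p := by
      rw [show α-1 = p+p by rw [hp_def]; ring, Real.rpow_add ht0]
    rw [hPP]
    ring
  -- assemble
  rw [hBq] at ftcB
  rw [hSplit2, hSplit1, ftcA, hBq]
  have hαne : α ≠ 0 := hα0.ne'
  have hQ : ∫ t in Ioo (0:ℝ) 1, (1 - t^q) * (1-t)^(-1-α)
      = -(1/α) + (q/α) * eulerBeta q (1-α) := by linear_combination ftcB
  rw [hQ, hq_def]
  field_simp
  ring

lemma gammaId {α : ℝ} (hα0 : 0 < α) (hα2 : α < 2) :
    Real.Gamma ((1+α)/2) * Real.Gamma (2-α) / Real.Gamma ((3-α)/2)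
      = eulerBeta ((1+α)/2) ((2-α)/2) * 2 ^ (-α) := by
  have hΓ3 : 0 < Real.Gamma ((3-α)/2) := Real.Gamma_pos_of_pos (by linarith)
  have hΓh : 0 < Real.Gamma ((2-α)/2) := Real.Gamma_pos_of_pos (by linarith)
  have hΓq : 0 < Real.Gamma ((1+α)/2) := Real.Gamma_pos_of_pos (by linarith)
  have hΓa : 0 < Real.Gamma (2-α) := Real.Gamma_pos_of_pos (by linarith)
  have hπ : (0:ℝ) < Real.sqrt π := Real.sqrt_pos.mpr Real.pi_pos
  have hΓ32 : Real.Gamma ((1+α)/2 + (2-α)/2) = Real.sqrt π / 2 := by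
    rw [show (1+α)/2 + (2-α)/2 = 1/2 + 1 by ring, Real.Gamma_add_one (by norm_num),
      Real.Gamma_one_half_eq]
    ring
  have hdup := Real.Gamma_mul_Gamma_add_half ((2-α)/2)
  rw [show (2-α)/2 + 1/2 = (3-α)/2 by ring, show 2*((2-α)/2) = 2-α by ring] at hdup
  rw [show (1:ℝ)-(2-α) = α-1 by ring] at hdup
  have h2 : (2:ℝ)^(α-1) * (2:ℝ)^(-α) = 1/2 := by
    rw [← Real.rpow_add two_pos, show α-1+(-α) = -1 by ring]
    norm_num
  rw [eulerBeta, hΓ32]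
  rw [div_mul_eq_mul_div, div_eq_div_iff hΓ3.ne' (by positivity)]
  linear_combination (-(Real.Gamma ((1+α)/2) * (2:ℝ)^(-α))) * hdup
    + (-(Real.Gamma ((1+α)/2) * Real.Gamma (2-α) * Real.sqrt π)) * h2

lemma keyId_lt {α : ℝ} (hα0 : 0 < α) (hα1 : α < 1) :
    (1-α) * eulerBeta ((α+1)/2) (1-α) = eulerBeta ((1+α)/2) ((2-α)/2) * 2 ^ (-α) := by
  rw [← gammaId hα0 (by linarith), eulerBeta,
    show (α+1)/2 + (1-α) = (3-α)/2 by ring, show (α+1)/2 = (1+α)/2 by ring]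
  rw [show (2:ℝ)-α = (1-α)+1 by ring, Real.Gamma_add_one (by linarith : (1:ℝ)-α ≠ 0)]
  ring
lemma keyId_gt {α : ℝ} (hα1 : 1 < α) (hα2 : α < 2) :
    ((α-1)/2) * eulerBeta ((α-1)/2) (2-α) = eulerBeta ((1+α)/2) ((2-α)/2) * 2 ^ (-α) := by
  rw [← gammaId (by linarith) hα2, eulerBeta,
    show (α-1)/2 + (2-α) = (3-α)/2 by ring]
  rw [show (1+α)/2 = (α-1)/2 + 1 by ring, Real.Gamma_add_one (by
    have : (0:ℝ) < (α-1)/2 := by linarith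
    exact this.ne')]
  ring

theorem gamma_at_midpoint (α : ℝ) (hα0 : 0 < α) (hα2 : α < 2) :
    (∫ t in Set.Ioo (0 : ℝ) 1,
        (t ^ ((α - 1) / 2) - 1) * (1 - t ^ (α - (α - 1) / 2 - 1)) / (1 - t) ^ (1 + α)) =
      -(1 / α) * (eulerBeta ((1 + α) / 2) ((2 - α) / 2) * 2 ^ (-α) - 1) := by
  rw [show α - (α - 1) / 2 - 1 = (α - 1) / 2 by ring]
  have hIeq : (∫ t in Set.Ioo (0 : ℝ) 1,
        (t ^ ((α - 1) / 2) - 1) * (1 - t ^ ((α - 1) / 2)) / (1 - t) ^ (1 + α))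
      = -∫ t in Ioo (0:ℝ) 1,
          (1 - t ^ ((α-1)/2)) * (1 - t ^ ((α-1)/2)) * (1-t) ^ (-1-α) := by
    rw [← integral_neg]
    refine setIntegral_congr_fun measurableSet_Ioo (fun t ht => ?_)
    have h1t : (0:ℝ) < 1 - t := by linarith [ht.2]
    rw [show (-1-α:ℝ) = -(1+α) by ring, Real.rpow_neg h1t.le, div_eq_mul_inv]
    ring
  rw [hIeq]
  rcases lt_trichotomy α 1 with h1 | h1 | h1
  · rw [F_lt_one hα0 h1]
    have key := keyId_lt hα0 h1
    linear_combination (-1/α) * key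
  · subst h1
    have hz : (∫ t in Ioo (0:ℝ) 1,
        (1 - t ^ (((1:ℝ)-1)/2)) * (1 - t ^ (((1:ℝ)-1)/2)) * (1-t) ^ (-1-(1:ℝ))) = 0 := by
      have he : EqOn (fun t : ℝ => (1 - t ^ (((1:ℝ)-1)/2)) * (1 - t ^ (((1:ℝ)-1)/2))
          * (1-t) ^ (-1-(1:ℝ))) (fun _ => (0:ℝ)) (Ioo 0 1) := by
        intro t ht
        norm_num
      rw [setIntegral_congr_fun measurableSet_Ioo he, integral_zero]
    rw [hz, neg_zero]
    have e1 : ((1:ℝ)+1)/2 = 1 := by norm_num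
    have e2 : ((2:ℝ)-1)/2 = 1/2 := by norm_num
    rw [e1, e2, eulerBeta, Real.Gamma_one, show (1:ℝ) + 1/2 = 1/2 + 1 by ring,
      Real.Gamma_add_one (by norm_num), Real.Gamma_one_half_eq]
    have h2 : ((2:ℝ):ℝ)^(-(1:ℝ)) = 1/2 := by
      rw [Real.rpow_neg_one]
      norm_num
    rw [h2]
    have hπ : Real.sqrt π ≠ 0 := ne_of_gt (Real.sqrt_pos.mpr Real.pi_pos)
    field_simp
    ring
  · rw [F_gt_one h1 hα2]
    have key := keyId_gt h1 hα2
    linear_combination (-1/α) * key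
end

section
/- Let 0 < α < 2 with α ≠ 1, and let −1 < p < α. Then γ(α,p) = [1/(α(α−1))]·{(p+1−α)(p+2−α)·B(p+1, 2−α) − (1−α)(2−α)·B(1, 2−α) + p(p−1)·B(α−p, 2−α)}, where γ(α,p) = ∫_0^1 (t^p − 1)(1 − t^{α−p−1}) / (1 − t)^{1+α} dt and B is the Euler beta function. -/
open MeasureTheory Real Set intervalIntegral

lemma cpow_eq_ofReal {x : ℝ} (hx : x ∈ Icc (0:ℝ) 1) (a b : ℝ) :
    (x : ℂ) ^ ((a : ℂ) - 1) * ((1:ℂ) - x) ^ ((b : ℂ) - 1)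
      = ((x ^ (a - 1) * (1 - x) ^ (b - 1) : ℝ) : ℂ) := by
  have h1 : ((1:ℂ) - (x:ℂ)) = (((1 - x : ℝ)) : ℂ) := by push_cast; ring
  have h2 : ((a : ℂ) - 1) = ((a - 1 : ℝ) : ℂ) := by push_cast; ring
  have h3 : ((b : ℂ) - 1) = ((b - 1 : ℝ) : ℂ) := by push_cast; ring
  rw [h1, h2, h3, ← Complex.ofReal_cpow hx.1, ← Complex.ofReal_cpow (by linarith [hx.2]),
    ← Complex.ofReal_mul]

lemma betaIntegrable {a b : ℝ} (ha : 0 < a) (hb : 0 < b) :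
    IntervalIntegrable (fun t : ℝ => t ^ (a - 1) * (1 - t) ^ (b - 1)) volume 0 1 := by
  have h := (Complex.betaIntegral_convergent (u := a) (v := b) (by simpa using ha)
    (by simpa using hb)).norm
  apply h.congr
  have : ∀ x ∈ Ioc (0:ℝ) 1, ‖(x : ℂ) ^ ((a : ℂ) - 1) * ((1:ℂ) - x) ^ ((b : ℂ) - 1)‖
      = x ^ (a - 1) * (1 - x) ^ (b - 1) := by
    intro x hx
    rw [cpow_eq_ofReal ⟨hx.1.le, hx.2⟩, Complex.norm_real, Real.norm_eq_abs, abs_of_nonneg]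
    exact mul_nonneg (Real.rpow_nonneg hx.1.le _) (Real.rpow_nonneg (by linarith [hx.2]) _)
  exact fun x hx => this x (by rwa [uIoc_of_le zero_le_one] at hx)

lemma realBeta {a b : ℝ} (ha : 0 < a) (hb : 0 < b) :
    ∫ t in (0:ℝ)..1, t ^ (a - 1) * (1 - t) ^ (b - 1) = eulerBeta a b := by
  have key := Complex.Gamma_mul_Gamma_eq_betaIntegral (s := a) (t := b)
    (by simpa using ha) (by simpa using hb)
  have hint : Complex.betaIntegral a b
      = ((∫ t in (0:ℝ)..1, t ^ (a - 1) * (1 - t) ^ (b - 1) : ℝ) : ℂ) := by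
    rw [Complex.betaIntegral, ← intervalIntegral.integral_ofReal]
    refine intervalIntegral.integral_congr fun x hx => ?_
    rw [uIcc_of_le zero_le_one] at hx
    exact cpow_eq_ofReal hx a b
  rw [hint, ← Complex.ofReal_add, Complex.Gamma_ofReal, Complex.Gamma_ofReal,
    Complex.Gamma_ofReal, ← Complex.ofReal_mul, ← Complex.ofReal_mul] at key
  have key' : Real.Gamma a * Real.Gamma b
      = Real.Gamma (a + b) * ∫ t in (0:ℝ)..1, t ^ (a - 1) * (1 - t) ^ (b - 1) :=
    mod_cast key
  have hG : Real.Gamma (a + b) ≠ 0 := (Real.Gamma_pos_of_pos (by linarith)).ne'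
  rw [eulerBeta, key']
  field_simp

lemma mvt_zero_at_one {f f' : ℝ → ℝ} {C : ℝ}
    (hd : ∀ y ∈ Icc (1/2:ℝ) 1, HasDerivAt f (f' y) y)
    (hb : ∀ y ∈ Icc (1/2:ℝ) 1, |f' y| ≤ C)
    (hf1 : f 1 = 0) {x : ℝ} (hx : x ∈ Icc (1/2:ℝ) 1) : |f x| ≤ C * (1 - x) := by
  have h := (convex_Icc (1/2:ℝ) 1).norm_image_sub_le_of_norm_hasDerivWithin_le
    (fun y hy => (hd y hy).hasDerivWithinAt) hb (right_mem_Icc.mpr (by norm_num)) hx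
  rw [hf1, sub_zero, Real.norm_eq_abs, Real.norm_eq_abs, abs_sub_comm,
    abs_of_nonneg (by linarith [hx.2] : (0:ℝ) ≤ 1 - x)] at h
  exact h

lemma rpow_le_half_bound (e : ℝ) {y : ℝ} (hy : y ∈ Icc (1/2:ℝ) 1) :
    y ^ e ≤ (1/2:ℝ) ^ e + 1 := by
  rcases le_or_gt 0 e with he | he
  · have h1 : y ^ e ≤ 1 := Real.rpow_le_one (by linarith [hy.1]) hy.2 he
    have h2 : (0:ℝ) ≤ (1/2:ℝ) ^ e := Real.rpow_nonneg (by norm_num) _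
    linarith
  · have h1 : y ^ e ≤ (1/2:ℝ) ^ e :=
      Real.rpow_le_rpow_of_nonpos (by norm_num) hy.1 he.le
    linarith

lemma rpow_sub_one_bound (s : ℝ) {x : ℝ} (hx : x ∈ Icc (1/2:ℝ) 1) :
    |x ^ s - 1| ≤ (|s| * ((1/2:ℝ) ^ (s-1) + 1)) * (1 - x) := by
  refine mvt_zero_at_one (f := fun y => y ^ s - 1) (f' := fun y => s * y ^ (s-1)) (fun y hy => ?_) (fun y hy => ?_)
    (by norm_num) hx
  · exact (Real.hasDerivAt_rpow_const (Or.inl (by linarith [hy.1] : y ≠ 0))).sub_const 1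
  · rw [abs_mul, abs_of_nonneg (Real.rpow_nonneg (by linarith [hy.1]) _)]
    exact mul_le_mul_of_nonneg_left (rpow_le_half_bound _ hy) (abs_nonneg s)

lemma phi_integrableOn {α p : ℝ} (hα0 : 0 < α) (hα2 : α < 2) (hp1 : -1 < p) (hpα : p < α) :
    IntegrableOn (fun t : ℝ => (t ^ p - 1) * (1 - t ^ (α - p - 1)) / (1 - t) ^ (1 + α))
      (Ioo (0:ℝ) 1) volume := by
  have hq1 : (-1:ℝ) < α - p - 1 := by linarith
  have hmeas : Measurable fun t : ℝ =>
      (t ^ p - 1) * (1 - t ^ (α - p - 1)) / (1 - t) ^ (1 + α) := by fun_prop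
  rw [← Ioc_union_Ioo_eq_Ioo (by norm_num : (0:ℝ) ≤ 1/2) (by norm_num : (1/2:ℝ) < 1)]
  apply IntegrableOn.union
  · -- on Ioc 0 (1/2)
    have hg : IntegrableOn
        (fun t : ℝ => (2:ℝ) ^ (1+α) * (t ^ p + (t ^ (α-p-1) + (t ^ (α-1) + 1))))
        (Ioc (0:ℝ) (1/2)) volume := by
      refine Integrable.const_mul ?_ _
      have i1 := (intervalIntegrable_rpow' (a := 0) (b := 1/2) hp1).1
      have i2 := (intervalIntegrable_rpow' (a := 0) (b := 1/2) hq1).1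
      have i3 := (intervalIntegrable_rpow' (a := 0) (b := 1/2)
        (by linarith : (-1:ℝ) < α - 1)).1
      exact i1.add (i2.add (i3.add (integrableOn_const (by simp))))
    refine Integrable.mono' hg hmeas.aestronglyMeasurable ?_
    rw [ae_restrict_iff' measurableSet_Ioc]
    filter_upwards with t ht
    have ht0 : 0 < t := ht.1
    have h1t : (1/2:ℝ) ≤ 1 - t := by linarith [ht.2]
    have hZpos : (0:ℝ) < (1 - t) ^ (1 + α) := Real.rpow_pos_of_pos (by linarith) _
    have hinv : ((1 - t) ^ (1 + α))⁻¹ ≤ (2:ℝ) ^ (1 + α) := by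
      have h1 : ((1/2:ℝ)) ^ (1+α) ≤ (1 - t) ^ (1+α) :=
        Real.rpow_le_rpow (by norm_num) h1t (by linarith)
      have h2 : ((1 - t) ^ (1+α))⁻¹ ≤ (((1/2:ℝ)) ^ (1+α))⁻¹ := by
        apply inv_anti₀ (Real.rpow_pos_of_pos (by norm_num) _) h1
      have h3 : (((1/2:ℝ)) ^ (1+α))⁻¹ = (2:ℝ) ^ (1+α) := by
        rw [← Real.inv_rpow (by norm_num : (0:ℝ) ≤ 1/2)]; norm_num
      linarith
    have hN : |(t ^ p - 1) * (1 - t ^ (α - p - 1))|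
        ≤ t ^ p + (t ^ (α-p-1) + (t ^ (α-1) + 1)) := by
      have e : t ^ p * t ^ (α - p - 1) = t ^ (α - 1) := by
        rw [← Real.rpow_add ht0]; ring_nf
      have b1 : |t ^ p - 1| ≤ t ^ p + 1 := by
        have := Real.rpow_nonneg ht0.le (p : ℝ) (x := t)
        rw [abs_sub_le_iff]; constructor <;> nlinarith [Real.rpow_nonneg ht0.le p]
      have b2 : |1 - t ^ (α - p - 1)| ≤ 1 + t ^ (α-p-1) := by
        rw [abs_sub_le_iff]; constructor <;> nlinarith [Real.rpow_nonneg ht0.le (α-p-1)]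
      calc |(t ^ p - 1) * (1 - t ^ (α - p - 1))| = |t ^ p - 1| * |1 - t ^ (α - p - 1)| :=
            abs_mul _ _
        _ ≤ (t ^ p + 1) * (1 + t ^ (α-p-1)) := by
            apply mul_le_mul b1 b2 (abs_nonneg _)
            positivity
        _ = t ^ p + (t ^ (α-p-1) + (t ^ p * t ^ (α - p - 1) + 1)) := by ring
        _ = t ^ p + (t ^ (α-p-1) + (t ^ (α-1) + 1)) := by rw [e]
    calc ‖(t ^ p - 1) * (1 - t ^ (α - p - 1)) / (1 - t) ^ (1 + α)‖
        = |(t ^ p - 1) * (1 - t ^ (α - p - 1))| * ((1 - t) ^ (1 + α))⁻¹ := by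
          rw [Real.norm_eq_abs, abs_div, abs_of_pos hZpos, div_eq_mul_inv]
      _ ≤ (t ^ p + (t ^ (α-p-1) + (t ^ (α-1) + 1))) * (2:ℝ) ^ (1+α) := by
          apply mul_le_mul hN hinv (inv_nonneg.mpr hZpos.le)
          positivity
      _ = (2:ℝ) ^ (1+α) * (t ^ p + (t ^ (α-p-1) + (t ^ (α-1) + 1))) := by ring
  · -- on Ioo (1/2) 1
    set Cp := |p| * ((1/2:ℝ) ^ (p-1) + 1) with hCp
    set Cq := |α - p - 1| * ((1/2:ℝ) ^ (α-p-2) + 1) with hCq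
    have hCp0 : 0 ≤ Cp := by positivity
    have hCq0 : 0 ≤ Cq := by positivity
    have hg : IntegrableOn (fun t : ℝ => (Cp * Cq) * (1 - t) ^ (1 - α))
        (Ioo (1/2:ℝ) 1) volume := by
      have hb := betaIntegrable (a := 1) (b := 2 - α) one_pos (by linarith)
      rw [intervalIntegrable_iff_integrableOn_Ioc_of_le zero_le_one] at hb
      have hb' : IntegrableOn (fun t : ℝ => (1 - t) ^ (1 - α)) (Ioc (0:ℝ) 1) volume := by
        refine hb.congr_fun (fun x hx => ?_) measurableSet_Ioc
        beta_reduce; rw [sub_self, Real.rpow_zero, one_mul, show (2:ℝ) - α - 1 = 1 - α by ring]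
      exact ((hb'.mono_set (Ioo_subset_Ioc_self.trans
        (Ioc_subset_Ioc_left (by norm_num)))).const_mul _)
    refine Integrable.mono' hg hmeas.aestronglyMeasurable ?_
    rw [ae_restrict_iff' measurableSet_Ioo]
    filter_upwards with t ht
    have ht0 : (0:ℝ) < t := by linarith [ht.1]
    have h1t : (0:ℝ) < 1 - t := by linarith [ht.2]
    have htIcc : t ∈ Icc (1/2:ℝ) 1 := ⟨ht.1.le, ht.2.le⟩
    have hb1 : |t ^ p - 1| ≤ Cp * (1 - t) := rpow_sub_one_bound p htIcc
    have hb2 : |1 - t ^ (α - p - 1)| ≤ Cq * (1 - t) := by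
      rw [abs_sub_comm]
      have := rpow_sub_one_bound (α - p - 1) htIcc
      rw [show α - p - 1 - 1 = α - p - 2 by ring] at this
      exact this
    have hZpos : (0:ℝ) < (1 - t) ^ (1 + α) := Real.rpow_pos_of_pos h1t _
    have key : (1 - t) ^ (1 - α) = (1 - t) * (1 - t) * ((1 - t) ^ (1 + α))⁻¹ := by
      rw [show (1:ℝ) - α = 1 + 1 - (1 + α) by ring, Real.rpow_sub h1t,
        Real.rpow_add h1t, Real.rpow_one, div_eq_mul_inv]
    calc ‖(t ^ p - 1) * (1 - t ^ (α - p - 1)) / (1 - t) ^ (1 + α)‖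
        = |t ^ p - 1| * |1 - t ^ (α - p - 1)| * ((1 - t) ^ (1 + α))⁻¹ := by
          rw [Real.norm_eq_abs, abs_div, abs_mul, abs_of_pos hZpos, div_eq_mul_inv]
      _ ≤ (Cp * (1 - t)) * (Cq * (1 - t)) * ((1 - t) ^ (1 + α))⁻¹ := by
          apply mul_le_mul_of_nonneg_right _ (inv_nonneg.mpr hZpos.le)
          apply mul_le_mul hb1 hb2 (abs_nonneg _)
          positivity
      _ = (Cp * Cq) * ((1 - t) * (1 - t) * ((1 - t) ^ (1 + α))⁻¹) := by ring
      _ = (Cp * Cq) * (1 - t) ^ (1 - α) := by rw [← key]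

noncomputable def Gaux (α p : ℝ) (x : ℝ) : ℝ :=
  (x ^ (p+1) + x ^ (α-p) - x ^ α - x) * (1-x) ^ (-α) / α
  + ((α-p-1) * x ^ (p+1) + p * x ^ (α-p) - (α-1) * x) * (1-x) ^ (1-α) / (α*(α-1))

lemma Gaux_hasDerivAt {α p : ℝ} (hα0 : 0 < α) (hα1 : α ≠ 1) {t : ℝ}
    (ht : t ∈ Ioo (0:ℝ) 1) :
    HasDerivAt (Gaux α p)
      ((t ^ p - 1) * (1 - t ^ (α - p - 1)) / (1 - t) ^ (1 + α)
        - (((p+1-α)*(p+2-α)/(α*(α-1))) * (t ^ p * (1-t) ^ (1-α))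
          + (p*(p-1)/(α*(α-1))) * (t ^ (α-p-1) * (1-t) ^ (1-α))
          - ((1-α)*(2-α)/(α*(α-1))) * ((1-t) ^ (1-α)))) t := by
  obtain ⟨ht0, ht1⟩ := ht
  have ht0' : t ≠ 0 := ht0.ne'
  have h1t : (0:ℝ) < 1 - t := by linarith
  have h1t' : (1:ℝ) - t ≠ 0 := h1t.ne'
  have hα' : α ≠ 0 := hα0.ne'
  have hα1' : α - 1 ≠ 0 := sub_ne_zero.mpr hα1
  have hd1 : HasDerivAt (fun x : ℝ => x ^ (p+1)) ((p+1) * t ^ p) t := by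
    have h := Real.hasDerivAt_rpow_const (x := t) (p := p+1) (Or.inl ht0')
    rw [show p + 1 - 1 = p by ring] at h; exact h
  have hd2 : HasDerivAt (fun x : ℝ => x ^ (α-p)) ((α-p) * t ^ (α-p-1)) t :=
    Real.hasDerivAt_rpow_const (Or.inl ht0')
  have hd3 : HasDerivAt (fun x : ℝ => x ^ α) (α * t ^ (α-1)) t :=
    Real.hasDerivAt_rpow_const (Or.inl ht0')
  have hdW : HasDerivAt (fun x : ℝ => (1-x) ^ (-α)) (α * (1-t) ^ (-α-1)) t := by
    have h := (Real.hasDerivAt_rpow_const (x := 1-t) (p := -α)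
      (Or.inl h1t')).comp t ((hasDerivAt_id t).const_sub 1)
    rw [show α * (1-t) ^ (-α-1) = -α * (1-t) ^ (-α-1) * -1 by ring]
    exact h
  have hdZ : HasDerivAt (fun x : ℝ => (1-x) ^ (1-α)) (-(1-α) * (1-t) ^ (-α)) t := by
    have h := (Real.hasDerivAt_rpow_const (x := 1-t) (p := 1-α)
      (Or.inl h1t')).comp t ((hasDerivAt_id t).const_sub 1)
    rw [show (1:ℝ) - α - 1 = -α by ring] at h
    rw [show -(1-α) * (1-t) ^ (-α) = (1-α) * (1-t) ^ (-α) * -1 by ring]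
    exact h
  have hdP : HasDerivAt (fun x : ℝ => x ^ (p+1) + x ^ (α-p) - x ^ α - x)
      ((p+1) * t ^ p + (α-p) * t ^ (α-p-1) - α * t ^ (α-1) - 1) t :=
    ((hd1.add hd2).sub hd3).sub (hasDerivAt_id t)
  have hdQ : HasDerivAt (fun x : ℝ => (α-p-1) * x ^ (p+1) + p * x ^ (α-p) - (α-1) * x)
      ((α-p-1) * ((p+1) * t ^ p) + p * ((α-p) * t ^ (α-p-1)) - (α-1) * 1) t := by
    exact ((hd1.const_mul (α-p-1)).add (hd2.const_mul p)).sub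
      ((hasDerivAt_id t).const_mul (α-1))
  have hG := (((hdP.mul hdW).div_const α).add ((hdQ.mul hdZ).div_const (α*(α-1))))
  have hfun : (fun x : ℝ => (x ^ (p+1) + x ^ (α-p) - x ^ α - x) * (1-x) ^ (-α) / α
      + ((α-p-1) * x ^ (p+1) + p * x ^ (α-p) - (α-1) * x) * (1-x) ^ (1-α) / (α*(α-1)))
      = Gaux α p := rfl
  replace hG : HasDerivAt (Gaux α p) _ t := hG
  convert hG using 1
  have e1 : t ^ (p+1) = t ^ p * t := Real.rpow_add_one ht0' p
  have e2 : t ^ (α-p) = t ^ (α-p-1) * t := by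
    rw [← Real.rpow_add_one ht0' (α-p-1)]; congr 1; ring
  have e3 : t ^ α = t ^ p * t ^ (α-p-1) * t := by
    rw [← Real.rpow_add ht0, ← Real.rpow_add_one ht0']; congr 1; ring
  have e4 : t ^ (α-1) = t ^ p * t ^ (α-p-1) := by
    rw [← Real.rpow_add ht0]; congr 1; ring
  have e5 : (1-t) ^ (-α) = (1-t) ^ (-α-1) * (1-t) := by
    rw [← Real.rpow_add_one h1t' (-α-1)]; congr 1; ring
  have e6 : (1-t) ^ (1-α) = (1-t) ^ (-α-1) * (1-t) * (1-t) := by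
    rw [← Real.rpow_add_one h1t', ← Real.rpow_add_one h1t']; congr 1; ring
  have e7 : (1-t) ^ (-α-1) = ((1-t) ^ (1+α))⁻¹ := by
    rw [← Real.rpow_neg h1t.le]; congr 1; ring
  have hZ : (1-t) ^ (1+α) ≠ 0 := (Real.rpow_pos_of_pos h1t _).ne'
  rw [e1, e2, e3, e4, e5, e6, e7]
  field_simp
  ring

lemma Gaux_tendsto_zero {α p : ℝ} (hα0 : 0 < α) (hp1 : -1 < p) (hpα : p < α) :
    Filter.Tendsto (Gaux α p) (nhdsWithin 0 (Ioi 0)) (nhds 0) := by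
  have hp1' : (0:ℝ) < p + 1 := by linarith
  have hap : (0:ℝ) < α - p := by linarith
  have cin : ContinuousAt (fun x : ℝ => 1 - x) 0 := by fun_prop
  have c1 : ContinuousAt (fun x : ℝ => x ^ (p+1)) 0 :=
    Real.continuousAt_rpow_const 0 (p+1) (Or.inr hp1'.le)
  have c2 : ContinuousAt (fun x : ℝ => x ^ (α-p)) 0 :=
    Real.continuousAt_rpow_const 0 (α-p) (Or.inr hap.le)
  have c3 : ContinuousAt (fun x : ℝ => x ^ α) 0 :=
    Real.continuousAt_rpow_const 0 α (Or.inr hα0.le)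
  have c4 : ContinuousAt (fun x : ℝ => (1-x) ^ (-α)) 0 :=
    ContinuousAt.comp (Real.continuousAt_rpow_const _ _ (Or.inl (by norm_num))) cin
  have c5 : ContinuousAt (fun x : ℝ => (1-x) ^ (1-α)) 0 :=
    ContinuousAt.comp (Real.continuousAt_rpow_const _ _ (Or.inl (by norm_num))) cin
  have hc : ContinuousAt (Gaux α p) 0 := by
    unfold Gaux
    exact ((((c1.add c2).sub c3).sub continuousAt_id).mul c4).div_const α |>.add
      (((((c1.const_mul _).add (c2.const_mul _)).sub
        (continuousAt_id.const_mul _)).mul c5).div_const _)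
  have hval : Gaux α p 0 = 0 := by
    unfold Gaux
    rw [Real.zero_rpow hp1'.ne', Real.zero_rpow hap.ne', Real.zero_rpow hα0.ne']
    norm_num
  have := hc.tendsto.mono_left
    (nhdsWithin_le_nhds : nhdsWithin (0:ℝ) (Ioi 0) ≤ nhds 0)
  rwa [hval] at this

lemma Gaux_tendsto_one {α p : ℝ} (hα0 : 0 < α) (hα2 : α < 2) (hα1 : α ≠ 1)
    (hp1 : -1 < p) (hpα : p < α) :
    Filter.Tendsto (Gaux α p) (nhdsWithin 1 (Iio 1)) (nhds 0) := by
  set Cp := |p| * ((1/2:ℝ) ^ (p-1) + 1) with hCpdef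
  set Cq := |α - p - 1| * ((1/2:ℝ) ^ (α-p-2) + 1) with hCqdef
  set CQ := |(α-p-1)*(p+1)| * ((1/2:ℝ) ^ p + 1)
    + |p*(α-p)| * ((1/2:ℝ) ^ (α-p-1) + 1) + |α-1| with hCQdef
  have hCp0 : 0 ≤ Cp := by positivity
  have hCq0 : 0 ≤ Cq := by positivity
  have hCQ0 : 0 ≤ CQ := by positivity
  set C := Cp * Cq / α + CQ / |α*(α-1)| with hCdef
  have hC0 : 0 ≤ C := by positivity
  have hbound : ∀ x ∈ Ioo (1/2:ℝ) 1, ‖Gaux α p x‖ ≤ C * (1-x) ^ (2-α) := by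
    intro x hx
    have hx0 : (0:ℝ) < x := by linarith [hx.1]
    have hx0' : x ≠ 0 := hx0.ne'
    have h1x : (0:ℝ) < 1 - x := by linarith [hx.2]
    have hxIcc : x ∈ Icc (1/2:ℝ) 1 := ⟨hx.1.le, hx.2.le⟩
    -- bound on P
    have eP : x ^ (p+1) + x ^ (α-p) - x ^ α - x
        = x * ((x ^ p - 1) * (1 - x ^ (α-p-1))) := by
      have e1 : x ^ (p+1) = x ^ p * x := Real.rpow_add_one hx0' p
      have e2 : x ^ (α-p) = x ^ (α-p-1) * x := by
        rw [← Real.rpow_add_one hx0' (α-p-1)]; congr 1; ring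
      have e3 : x ^ α = x ^ p * x ^ (α-p-1) * x := by
        rw [← Real.rpow_add hx0, ← Real.rpow_add_one hx0']; congr 1; ring
      rw [e1, e2, e3]; ring
    have hP : |x ^ (p+1) + x ^ (α-p) - x ^ α - x| ≤ (Cp * Cq) * ((1-x) * (1-x)) := by
      rw [eP, abs_mul, abs_mul]
      have hxle : |x| ≤ 1 := by rw [abs_of_pos hx0]; exact hx.2.le
      have hb1 : |x ^ p - 1| ≤ Cp * (1 - x) := rpow_sub_one_bound p hxIcc
      have hb2 : |1 - x ^ (α-p-1)| ≤ Cq * (1 - x) := by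
        rw [abs_sub_comm]
        have := rpow_sub_one_bound (α - p - 1) hxIcc
        rwa [show α - p - 1 - 1 = α - p - 2 by ring] at this
      calc |x| * (|x ^ p - 1| * |1 - x ^ (α-p-1)|)
          ≤ 1 * ((Cp * (1-x)) * (Cq * (1-x))) := by
            apply mul_le_mul hxle _ (by positivity) zero_le_one
            apply mul_le_mul hb1 hb2 (abs_nonneg _) (by positivity)
        _ = (Cp * Cq) * ((1-x) * (1-x)) := by ring
    -- bound on Q
    have hQ : |(α-p-1) * x ^ (p+1) + p * x ^ (α-p) - (α-1) * x| ≤ CQ * (1-x) := by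
      refine mvt_zero_at_one
        (f := fun y => (α-p-1) * y ^ (p+1) + p * y ^ (α-p) - (α-1) * y)
        (f' := fun y => (α-p-1) * ((p+1) * y ^ p) + p * ((α-p) * y ^ (α-p-1)) - (α-1))
        (fun y hy => ?_) (fun y hy => ?_)
        (by show (α-p-1) * (1:ℝ)^(p+1) + p * (1:ℝ)^(α-p) - (α-1)*1 = 0
            rw [Real.one_rpow, Real.one_rpow]; ring)
        hxIcc
      · have hy0 : y ≠ 0 := by intro h; rw [h] at hy; norm_num at hy
        have d1 := Real.hasDerivAt_rpow_const (x := y) (p := p+1) (Or.inl hy0)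
        rw [show p + 1 - 1 = p by ring] at d1
        have d2 := Real.hasDerivAt_rpow_const (x := y) (p := α-p) (Or.inl hy0)
        have := ((d1.const_mul (α-p-1)).add (d2.const_mul p)).sub
          ((hasDerivAt_id y).const_mul (α-1))
        rw [mul_one] at this; exact this
      · have h1 : |(α-p-1) * ((p+1) * y ^ p)| ≤ |(α-p-1)*(p+1)| * ((1/2:ℝ) ^ p + 1) := by
          rw [show (α-p-1) * ((p+1) * y ^ p) = ((α-p-1)*(p+1)) * y ^ p by ring, abs_mul,
            abs_of_nonneg (Real.rpow_nonneg (by linarith [hy.1]) _)]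
          exact mul_le_mul_of_nonneg_left (rpow_le_half_bound _ hy) (abs_nonneg _)
        have h2 : |p * ((α-p) * y ^ (α-p-1))| ≤ |p*(α-p)| * ((1/2:ℝ) ^ (α-p-1) + 1) := by
          rw [show p * ((α-p) * y ^ (α-p-1)) = (p*(α-p)) * y ^ (α-p-1) by ring, abs_mul,
            abs_of_nonneg (Real.rpow_nonneg (by linarith [hy.1]) _)]
          exact mul_le_mul_of_nonneg_left (rpow_le_half_bound _ hy) (abs_nonneg _)
        calc |(α-p-1) * ((p+1) * y ^ p) + p * ((α-p) * y ^ (α-p-1)) - (α-1)|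
            ≤ |(α-p-1) * ((p+1) * y ^ p) + p * ((α-p) * y ^ (α-p-1))| + |α-1| := abs_sub _ _
          _ ≤ |(α-p-1) * ((p+1) * y ^ p)| + |p * ((α-p) * y ^ (α-p-1))| + |α-1| := by
              linarith [abs_add_le ((α-p-1) * ((p+1) * y ^ p)) (p * ((α-p) * y ^ (α-p-1)))]
          _ ≤ CQ := by rw [hCQdef]; linarith
    -- combine
    have key1 : (1-x) ^ (2-α) = (1-x) * (1-x) * (1-x) ^ (-α) := by
      rw [show (2:ℝ) - α = 1 + (1 + -α) by ring, Real.rpow_add h1x, Real.rpow_add h1x,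
        Real.rpow_one]
      ring
    have key2 : (1-x) ^ (2-α) = (1-x) * (1-x) ^ (1-α) := by
      rw [show (2:ℝ) - α = 1 + (1 - α) by ring, Real.rpow_add h1x, Real.rpow_one]
    have hWpos : (0:ℝ) < (1-x) ^ (-α) := Real.rpow_pos_of_pos h1x _
    have hZpos : (0:ℝ) < (1-x) ^ (1-α) := Real.rpow_pos_of_pos h1x _
    rw [Gaux, Real.norm_eq_abs]
    calc |(x ^ (p+1) + x ^ (α-p) - x ^ α - x) * (1-x) ^ (-α) / α
          + ((α-p-1) * x ^ (p+1) + p * x ^ (α-p) - (α-1) * x) * (1-x) ^ (1-α) / (α*(α-1))|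
        ≤ |(x ^ (p+1) + x ^ (α-p) - x ^ α - x) * (1-x) ^ (-α) / α|
          + |((α-p-1) * x ^ (p+1) + p * x ^ (α-p) - (α-1) * x) * (1-x) ^ (1-α) / (α*(α-1))| :=
          abs_add_le _ _
      _ ≤ (Cp * Cq) * ((1-x) * (1-x)) * (1-x) ^ (-α) / α
          + CQ * (1-x) * (1-x) ^ (1-α) / |α*(α-1)| := by
          have t1 : |(x ^ (p+1) + x ^ (α-p) - x ^ α - x) * (1-x) ^ (-α) / α|
              ≤ (Cp * Cq) * ((1-x) * (1-x)) * (1-x) ^ (-α) / α := by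
            rw [abs_div, abs_mul, abs_of_pos hWpos, abs_of_pos hα0]
            gcongr
          have t2 : |((α-p-1) * x ^ (p+1) + p * x ^ (α-p) - (α-1) * x) * (1-x) ^ (1-α) / (α*(α-1))|
              ≤ CQ * (1-x) * (1-x) ^ (1-α) / |α*(α-1)| := by
            rw [abs_div, abs_mul, abs_of_pos hZpos]
            gcongr
          linarith
      _ = C * (1-x) ^ (2-α) := by
          have expand : C * (1-x) ^ (2-α)
              = Cp*Cq/α * ((1-x)*(1-x)*(1-x) ^ (-α)) + CQ/|α*(α-1)| * ((1-x)*(1-x) ^ (1-α)) := by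
            rw [hCdef, ← key1, ← key2]; ring
          rw [expand]; ring
  have hev : ∀ᶠ x in nhdsWithin 1 (Iio 1), ‖Gaux α p x‖ ≤ C * (1-x) ^ (2-α) := by
    filter_upwards [Ioo_mem_nhdsLT_of_mem
      (show (1:ℝ) ∈ Ioc (1/2:ℝ) 1 from ⟨by norm_num, le_refl 1⟩)] with x hx
    exact hbound x hx
  have hcont : ContinuousAt (fun x : ℝ => (1-x) ^ (2-α)) 1 :=
    ContinuousAt.comp (Real.continuousAt_rpow_const _ _
      (Or.inr (by linarith : (0:ℝ) ≤ 2-α))) (by fun_prop)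
  have h0 : ((1:ℝ) - 1) ^ (2-α) = 0 := by
    rw [show (1:ℝ)-1 = 0 by ring, Real.zero_rpow (ne_of_gt (by linarith : (0:ℝ) < 2-α))]
  have hg : Filter.Tendsto (fun x : ℝ => C * (1-x) ^ (2-α))
      (nhdsWithin 1 (Iio 1)) (nhds 0) := by
    simpa [Real.zero_rpow (ne_of_gt (by linarith : (0:ℝ) < 2-α))] using
      (Filter.Tendsto.const_mul C (hcont.tendsto.mono_left
        (nhdsWithin_le_nhds : nhdsWithin (1:ℝ) (Iio 1) ≤ nhds 1)))
  exact squeeze_zero_norm' hev hg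

theorem gamma_beta_formula (α p : ℝ) (hα0 : 0 < α) (hα2 : α < 2) (hα1 : α ≠ 1)
    (hp1 : -1 < p) (hpα : p < α) :
    (∫ t in Set.Ioo (0 : ℝ) 1,
        (t ^ p - 1) * (1 - t ^ (α - p - 1)) / (1 - t) ^ (1 + α)) =
      (1 / (α * (α - 1))) *
        ((p + 1 - α) * (p + 2 - α) * eulerBeta (p + 1) (2 - α)
          - (1 - α) * (2 - α) * eulerBeta 1 (2 - α)
          + p * (p - 1) * eulerBeta (α - p) (2 - α)) := by
  have hα' : α ≠ 0 := hα0.ne'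
  have hα1' : α - 1 ≠ 0 := sub_ne_zero.mpr hα1
  have h2α : (0:ℝ) < 2 - α := by linarith
  set cp := (p+1-α)*(p+2-α)/(α*(α-1)) with hcp
  set cq := p*(p-1)/(α*(α-1)) with hcq
  set c0 := (1-α)*(2-α)/(α*(α-1)) with hc0
  set φ := fun t : ℝ => (t ^ p - 1) * (1 - t ^ (α - p - 1)) / (1 - t) ^ (1 + α) with hφ
  set r := fun t : ℝ => cp * (t ^ p * (1-t) ^ (1-α))
    + cq * (t ^ (α-p-1) * (1-t) ^ (1-α)) - c0 * ((1-t) ^ (1-α)) with hr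
  -- integrability of the beta pieces
  have hB1 : IntervalIntegrable (fun t : ℝ => t ^ p * (1-t) ^ (1-α)) volume 0 1 := by
    have := betaIntegrable (a := p+1) (b := 2-α) (by linarith) h2α
    simpa only [show p+1-1 = p from by ring, show (2:ℝ)-α-1 = 1-α from by ring] using this
  have hB2 : IntervalIntegrable (fun t : ℝ => t ^ (α-p-1) * (1-t) ^ (1-α)) volume 0 1 := by
    have := betaIntegrable (a := α-p) (b := 2-α) (by linarith) h2α
    simpa only [show (2:ℝ)-α-1 = 1-α from by ring] using this
  have hB3 : IntervalIntegrable (fun t : ℝ => (1-t) ^ (1-α)) volume 0 1 := by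
    have := betaIntegrable (a := 1) (b := 2-α) one_pos h2α
    simpa only [sub_self, Real.rpow_zero, one_mul,
      show (2:ℝ)-α-1 = 1-α from by ring] using this
  have hφi : IntervalIntegrable φ volume 0 1 := by
    rw [intervalIntegrable_iff_integrableOn_Ioc_of_le zero_le_one,
      integrableOn_Ioc_iff_integrableOn_Ioo]
    exact phi_integrableOn hα0 hα2 hp1 hpα
  have hri : IntervalIntegrable r volume 0 1 :=
    ((hB1.const_mul cp).add (hB2.const_mul cq)).sub (hB3.const_mul c0)
  -- FTC
  have hftc : ∫ t in (0:ℝ)..1, (φ t - r t) = 0 - 0 := by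
    refine intervalIntegral.integral_eq_sub_of_hasDerivAt_of_tendsto zero_lt_one
      (fun t ht => ?_) (hφi.sub hri) (Gaux_tendsto_zero hα0 hp1 hpα)
      (Gaux_tendsto_one hα0 hα2 hα1 hp1 hpα)
    exact Gaux_hasDerivAt hα0 hα1 ht
  have hsplit : ∫ t in (0:ℝ)..1, φ t = ∫ t in (0:ℝ)..1, r t := by
    have := intervalIntegral.integral_sub hφi hri
    rw [hftc] at this
    linarith [this]
  -- value of ∫ r
  have hv1 : ∫ t in (0:ℝ)..1, t ^ p * (1-t) ^ (1-α) = eulerBeta (p+1) (2-α) := by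
    have := realBeta (a := p+1) (b := 2-α) (by linarith) h2α
    simpa only [show p+1-1 = p from by ring, show (2:ℝ)-α-1 = 1-α from by ring] using this
  have hv2 : ∫ t in (0:ℝ)..1, t ^ (α-p-1) * (1-t) ^ (1-α) = eulerBeta (α-p) (2-α) := by
    have := realBeta (a := α-p) (b := 2-α) (by linarith) h2α
    simpa only [show (2:ℝ)-α-1 = 1-α from by ring] using this
  have hv3 : ∫ t in (0:ℝ)..1, (1-t) ^ (1-α) = eulerBeta 1 (2-α) := by
    have := realBeta (a := 1) (b := 2-α) one_pos h2α
    simpa only [sub_self, Real.rpow_zero, one_mul,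
      show (2:ℝ)-α-1 = 1-α from by ring] using this
  have hrval : ∫ t in (0:ℝ)..1, r t
      = cp * eulerBeta (p+1) (2-α) + cq * eulerBeta (α-p) (2-α)
        - c0 * eulerBeta 1 (2-α) := by
    rw [hr]
    rw [intervalIntegral.integral_sub ((hB1.const_mul cp).add (hB2.const_mul cq))
      (hB3.const_mul c0), intervalIntegral.integral_add (hB1.const_mul cp)
      (hB2.const_mul cq), intervalIntegral.integral_const_mul,
      intervalIntegral.integral_const_mul, intervalIntegral.integral_const_mul,
      hv1, hv2, hv3]
  -- put everything together
  have hIoo : (∫ t in Set.Ioo (0 : ℝ) 1, φ t) = ∫ t in (0:ℝ)..1, φ t := by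
    rw [intervalIntegral.integral_of_le zero_le_one, integral_Ioc_eq_integral_Ioo]
  calc (∫ t in Set.Ioo (0 : ℝ) 1, φ t) = ∫ t in (0:ℝ)..1, φ t := hIoo
    _ = ∫ t in (0:ℝ)..1, r t := hsplit
    _ = cp * eulerBeta (p+1) (2-α) + cq * eulerBeta (α-p) (2-α)
        - c0 * eulerBeta 1 (2-α) := hrval
    _ = (1 / (α * (α - 1))) *
        ((p + 1 - α) * (p + 2 - α) * eulerBeta (p + 1) (2 - α)
          - (1 - α) * (2 - α) * eulerBeta 1 (2 - α)
          + p * (p - 1) * eulerBeta (α - p) (2 - α)) := by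
        rw [hcp, hcq, hc0]; field_simp; ring
end

section
/- For every d ≥ 1, κ_{d,1} = 0, and κ_{d,α} > 0 whenever α ∈ (0,2) and α ≠ 1, where κ_{d,α} = [π^{(d−1)/2} Γ((1+α)/2) / Γ((α+d)/2)] · [B((1+α)/2, (2−α)/2) − 2^α] / (α 2^α). -/
open MeasureTheory Real Set

/-- The optimal fractional Hardy constant for the half-space in dimension `d`. -/
noncomputable def kappa (d : ℕ) (α : ℝ) : ℝ :=
  (Real.pi ^ (((d : ℝ) - 1) / 2) * Real.Gamma ((1 + α) / 2) / Real.Gamma ((α + d) / 2)) *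
    ((eulerBeta ((1 + α) / 2) ((2 - α) / 2) - 2 ^ α) / (α * 2 ^ α))

/-- Strict convexity of `log ∘ Gamma` on `(0, ∞)`. -/
lemma myStrictConvexOn_log_Gamma : StrictConvexOn ℝ (Ioi (0:ℝ)) (log ∘ Real.Gamma) := by
  have h1 : ConvexOn ℝ (Ioi (0:ℝ)) (fun x => log (Real.Gamma (x + 1))) := by
    refine ⟨convex_Ioi 0, fun x hx y hy a b ha hb hab => ?_⟩
    have hx1 : x + 1 ∈ Ioi (0:ℝ) := by simp at hx ⊢; linarith
    have hy1 : y + 1 ∈ Ioi (0:ℝ) := by simp at hy ⊢; linarith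
    have := Real.convexOn_log_Gamma.2 hx1 hy1 ha hb hab
    simp only [Function.comp_apply, smul_eq_mul] at this ⊢
    have e : a * (x + 1) + b * (y + 1) = a * x + b * y + 1 := by linarith [hab]
    rwa [e] at this
  have h2 : StrictConvexOn ℝ (Ioi (0:ℝ)) (fun x : ℝ => -log x) := strictConcaveOn_log_Ioi.neg
  have hsum : StrictConvexOn ℝ (Ioi (0:ℝ)) (fun x => log (Real.Gamma (x + 1)) + -log x) :=
    h1.add_strictConvexOn h2
  have heq : ∀ z : ℝ, z ∈ Ioi (0:ℝ) →
      (log ∘ Real.Gamma) z = log (Real.Gamma (z + 1)) + -log z := by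
    intro z hz
    simp only [Function.comp_apply]
    rw [Real.Gamma_add_one (ne_of_gt hz), Real.log_mul (ne_of_gt hz)
      (Real.Gamma_pos_of_pos hz).ne']
    ring
  refine ⟨convex_Ioi 0, fun x hx y hy hxy a b ha hb hab => ?_⟩
  rw [heq x hx, heq y hy, heq _ ((convex_Ioi (0:ℝ)) hx hy ha.le hb.le hab)]
  exact hsum.2 hx hy hxy ha hb hab

/-- The auxiliary function whose strict minimum at `1` encodes the Hardy-constant inequality. -/
noncomputable def kf (α : ℝ) : ℝ :=
  log (Real.Gamma ((1 + α) / 2)) + log (Real.Gamma ((2 - α) / 2)) - α * log 2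

lemma kf_strictConvexOn : StrictConvexOn ℝ (Ioo (0:ℝ) 2) kf := by
  refine ⟨convex_Ioo 0 2, fun x hx y hy hxy a b ha hb hab => ?_⟩
  obtain ⟨hx0, hx2⟩ := hx
  obtain ⟨hy0, hy2⟩ := hy
  have hX1 : (1 + x) / 2 ∈ Ioi (0:ℝ) := by simp; linarith
  have hY1 : (1 + y) / 2 ∈ Ioi (0:ℝ) := by simp; linarith
  have hX2 : (2 - x) / 2 ∈ Ioi (0:ℝ) := by simp; linarith
  have hY2 : (2 - y) / 2 ∈ Ioi (0:ℝ) := by simp; linarith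
  have hne : (1 + x) / 2 ≠ (1 + y) / 2 := by
    intro h; exact hxy (by field_simp at h; linarith)
  have h1 := myStrictConvexOn_log_Gamma.2 hX1 hY1 hne ha hb hab
  have h2 := Real.convexOn_log_Gamma.2 hX2 hY2 ha.le hb.le hab
  simp only [Function.comp_apply, smul_eq_mul] at h1 h2 ⊢
  have e1 : a * ((1 + x) / 2) + b * ((1 + y) / 2) = (1 + (a * x + b * y)) / 2 := by
    field_simp; linarith
  have e2 : a * ((2 - x) / 2) + b * ((2 - y) / 2) = (2 - (a * x + b * y)) / 2 := by
    field_simp; linarith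
  rw [e1] at h1
  rw [e2] at h2
  simp only [kf]
  nlinarith [h1, h2]

lemma kf_hasDerivAt_one : HasDerivAt kf 0 1 := by
  have sqrt_pi_pos : (0:ℝ) < √π := Real.sqrt_pos.mpr Real.pi_pos
  have h1a : HasDerivAt (fun α : ℝ => (1 + α) / 2) (1 / 2) 1 := by
    simpa using ((hasDerivAt_id (1:ℝ)).const_add 1).div_const 2
  have h2a : HasDerivAt (fun α : ℝ => (2 - α) / 2) (-(1 / 2)) 1 := by
    have := ((hasDerivAt_id (1:ℝ)).const_sub 2).div_const 2
    exact this.congr_deriv (by norm_num)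
  have hG1 : HasDerivAt Real.Gamma (-Real.eulerMascheroniConstant) ((1 + (1:ℝ)) / 2) := by
    norm_num [Real.hasDerivAt_Gamma_one]
  have hGh : HasDerivAt Real.Gamma (-√π * (Real.eulerMascheroniConstant + 2 * log 2))
      ((2 - (1:ℝ)) / 2) := by
    have := Real.hasDerivAt_Gamma_one_half
    convert this using 2
    norm_num
  have c1 : HasDerivAt (fun α : ℝ => Real.Gamma ((1 + α) / 2))
      (-Real.eulerMascheroniConstant * (1 / 2)) 1 := by
    have := hG1.comp (h₂ := Real.Gamma) 1 h1a; exact this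
  have c2 : HasDerivAt (fun α : ℝ => Real.Gamma ((2 - α) / 2))
      (-√π * (Real.eulerMascheroniConstant + 2 * log 2) * (-(1 / 2))) 1 := by
    have := hGh.comp (h₂ := Real.Gamma) 1 h2a; exact this
  have v1 : Real.Gamma ((1 + (1:ℝ)) / 2) ≠ 0 := by norm_num [Real.Gamma_one]
  have v2 : Real.Gamma ((2 - (1:ℝ)) / 2) ≠ 0 := by
    norm_num [Real.Gamma_one_half_eq]; positivity
  have l1 := c1.log v1
  have l2 := c2.log v2
  have l3 : HasDerivAt (fun α : ℝ => α * log 2) (log 2) 1 := by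
    simpa using (hasDerivAt_id (1:ℝ)).mul_const (log 2)
  have := (l1.add l2).sub l3
  refine this.congr_deriv ?_
  symm
  rw [show ((1:ℝ) + 1) / 2 = 1 by norm_num, show ((2:ℝ) - 1) / 2 = 1/2 by norm_num,
    Real.Gamma_one, Real.Gamma_one_half_eq]
  field_simp
  ring

lemma kf_one_lt {α : ℝ} (h0 : 0 < α) (h2 : α < 2) (h1 : α ≠ 1) : kf 1 < kf α := by
  have hm1 : (1:ℝ) ∈ Ioo (0:ℝ) 2 := by norm_num
  have hmα : α ∈ Ioo (0:ℝ) 2 := ⟨h0, h2⟩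
  rcases lt_or_gt_of_ne h1 with h | h
  · have := kf_strictConvexOn.slope_lt_of_hasDerivAt hmα hm1 h kf_hasDerivAt_one
    rw [slope_def_field] at this
    have h1α : (0:ℝ) < 1 - α := by linarith
    have h' := mul_neg_of_neg_of_pos this h1α
    rw [div_mul_cancel₀ _ h1α.ne'] at h'
    linarith
  · have := kf_strictConvexOn.lt_slope_of_hasDerivAt hm1 hmα h kf_hasDerivAt_one
    rw [slope_def_field] at this
    have h1α : (0:ℝ) < α - 1 := by linarith
    have h' := mul_pos this h1α
    rw [div_mul_cancel₀ _ h1α.ne'] at h'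
    linarith

lemma beta_gt {α : ℝ} (h0 : 0 < α) (h2 : α < 2) (h1 : α ≠ 1) :
    (2:ℝ) ^ α < eulerBeta ((1 + α) / 2) ((2 - α) / 2) := by
  have sqrt_pi_pos : (0:ℝ) < √π := Real.sqrt_pos.mpr Real.pi_pos
  have hA : (0:ℝ) < (1 + α) / 2 := by linarith
  have hB : (0:ℝ) < (2 - α) / 2 := by linarith
  have gA := Real.Gamma_pos_of_pos hA
  have gB := Real.Gamma_pos_of_pos hB
  have hkey := kf_one_lt h0 h2 h1
  have hkf1 : kf 1 = log (√π) - log 2 := by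
    simp only [kf]
    norm_num [Real.Gamma_one, Real.Gamma_one_half_eq]
  have hlog : log (√π / 2 * 2 ^ α) < log (Real.Gamma ((1 + α) / 2) * Real.Gamma ((2 - α) / 2)) := by
    rw [Real.log_mul (by positivity) (by positivity), Real.log_div sqrt_pi_pos.ne' two_ne_zero,
      Real.log_rpow two_pos, Real.log_mul gA.ne' gB.ne']
    rw [hkf1] at hkey
    simp only [kf] at hkey
    linarith
  have hprod : √π / 2 * 2 ^ α < Real.Gamma ((1 + α) / 2) * Real.Gamma ((2 - α) / 2) := by
    have := Real.exp_lt_exp.mpr hlog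
    rwa [Real.exp_log (by positivity), Real.exp_log (by positivity)] at this
  have hsum : (1 + α) / 2 + (2 - α) / 2 = 1 / 2 + 1 := by ring
  have hG32 : Real.Gamma ((1 + α) / 2 + (2 - α) / 2) = √π / 2 := by
    rw [hsum, Real.Gamma_add_one (by norm_num : (1/2:ℝ) ≠ 0), Real.Gamma_one_half_eq]
    ring
  rw [eulerBeta, hG32, lt_div_iff₀ (by positivity)]
  calc (2:ℝ) ^ α * (√π / 2) = √π / 2 * 2 ^ α := by ring
  _ < _ := hprod

theorem kappa_zero_iff_alpha_one (d : ℕ) (hd : 1 ≤ d) :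
    kappa d 1 = 0 ∧ ∀ α : ℝ, 0 < α → α < 2 → α ≠ 1 → 0 < kappa d α := by
  have sqrt_pi_pos : (0:ℝ) < √π := Real.sqrt_pos.mpr Real.pi_pos
  constructor
  · have hbeta : eulerBeta ((1 + (1:ℝ)) / 2) ((2 - (1:ℝ)) / 2) = 2 := by
      rw [show ((1:ℝ) + 1) / 2 = 1 by norm_num, show ((2:ℝ) - 1) / 2 = 1/2 by norm_num,
        eulerBeta, show (1:ℝ) + 1/2 = 1/2 + 1 by norm_num,
        Real.Gamma_add_one (by norm_num : (1/2:ℝ) ≠ 0), Real.Gamma_one,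
        Real.Gamma_one_half_eq]
      rw [div_eq_iff (by positivity)]
      ring
    rw [kappa, hbeta, Real.rpow_one]
    norm_num
  · intro α h0 h2 h1
    have hA : (0:ℝ) < (1 + α) / 2 := by linarith
    have hd' : (0:ℝ) < (α + d) / 2 := by
      have : (1:ℝ) ≤ (d:ℝ) := by exact_mod_cast hd
      linarith
    have hfst : 0 < Real.pi ^ (((d : ℝ) - 1) / 2) * Real.Gamma ((1 + α) / 2) /
        Real.Gamma ((α + d) / 2) := by
      have := Real.Gamma_pos_of_pos hA
      have := Real.Gamma_pos_of_pos hd'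
      have := Real.rpow_pos_of_pos Real.pi_pos (((d : ℝ) - 1) / 2)
      positivity
    have hsnd : 0 < (eulerBeta ((1 + α) / 2) ((2 - α) / 2) - 2 ^ α) / (α * 2 ^ α) := by
      apply div_pos
      · exact sub_pos.mpr (beta_gt h0 h2 h1)
      · exact mul_pos h0 (Real.rpow_pos_of_pos two_pos α)
    exact mul_pos hfst hsnd
end

section
/- Let d ≥ 2, 0 < α < 2, n ≥ 1, and let L be the set {x ∈ ℝ^d : max_{1≤k≤d−1}|x_k| < n² − 1, 2/n ≤ x_d < 1/2}. There is a constant c depending only on d and α such that for every x ∈ L, ∫_{{y ∈ ℝ^d : 0 < y_d < 1/n}} |x − y|^{−d−α} dy ≤ c · x_d^{−α−1} / n. -/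
open MeasureTheory Real Set

theorem aux_scale (d : ℕ) (β : ℝ) (a : ℝ) (ha : 0 < a) :
    ∫⁻ z : Fin (d+1) → ℝ, ENNReal.ofReal ((a + ‖z‖) ^ β) =
      ENNReal.ofReal (a ^ (β + (d+1 : ℕ))) *
        ∫⁻ w : Fin (d+1) → ℝ, ENNReal.ofReal ((1 + ‖w‖) ^ β) := by
  have hmeas : Measurable fun w : Fin (d+1) → ℝ => ENNReal.ofReal ((1 + ‖w‖) ^ β) := by fun_prop
  have key : ∀ z : Fin (d+1) → ℝ, (a + ‖z‖) ^ β = a ^ β * (1 + ‖a⁻¹ • z‖) ^ β := by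
    intro z
    rw [norm_smul, norm_inv, Real.norm_eq_abs, abs_of_pos ha,
      ← Real.mul_rpow ha.le (by positivity)]
    congr 1
    field_simp
  simp_rw [key]
  have h1 : ∀ z : Fin (d+1) → ℝ, ENNReal.ofReal (a ^ β * (1 + ‖a⁻¹ • z‖) ^ β)
      = ENNReal.ofReal (a ^ β) * ENNReal.ofReal ((1 + ‖a⁻¹ • z‖) ^ β) := fun z =>
    ENNReal.ofReal_mul (by positivity)
  simp_rw [h1]
  rw [lintegral_const_mul' _ _ ENNReal.ofReal_ne_top]
  have hsmul : ∫⁻ z : Fin (d+1) → ℝ, ENNReal.ofReal ((1 + ‖a⁻¹ • z‖) ^ β)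
      = ENNReal.ofReal ((a : ℝ) ^ (d+1 : ℕ)) * ∫⁻ w : Fin (d+1) → ℝ, ENNReal.ofReal ((1 + ‖w‖) ^ β) := by
    have hm := Measure.map_addHaar_smul (μ := (volume : Measure (Fin (d+1) → ℝ))) (r := a⁻¹)
      (inv_ne_zero ha.ne')
    have h2 : ∫⁻ z : Fin (d+1) → ℝ, ENNReal.ofReal ((1 + ‖a⁻¹ • z‖) ^ β)
        = ∫⁻ w, ENNReal.ofReal ((1 + ‖w‖) ^ β) ∂(Measure.map (fun z : Fin (d+1) → ℝ => a⁻¹ • z) volume) := by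
      rw [lintegral_map hmeas (by fun_prop : Measurable fun z : Fin (d+1) → ℝ => a⁻¹ • z)]
    rw [h2, hm, lintegral_smul_measure]
    congr 2
    rw [Module.finrank_fintype_fun_eq_card, Fintype.card_fin, inv_pow,
      abs_of_pos (by positivity), inv_inv]
  rw [hsmul, ← mul_assoc, ← ENNReal.ofReal_mul (by positivity), ← Real.rpow_natCast a (d+1),
    ← Real.rpow_add ha]

theorem slab_integral_bound (d : ℕ) (α : ℝ) (hα0 : 0 < α) (hα2 : α < 2) :
    ∃ c : ℝ, ∀ n : ℕ, 1 ≤ n → ∀ x : EuclideanSpace ℝ (Fin (d + 2)),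
      (∀ k : Fin (d + 1), |x k.castSucc| < (n : ℝ) ^ 2 - 1) →
      2 / (n : ℝ) ≤ x (Fin.last (d + 1)) → x (Fin.last (d + 1)) < 1 / 2 →
      (∫ y in {y : EuclideanSpace ℝ (Fin (d + 2)) |
            0 < y (Fin.last (d + 1)) ∧ y (Fin.last (d + 1)) < 1 / (n : ℝ)},
          ‖x - y‖ ^ (-((d : ℝ) + 2) - α)) ≤
        c * x (Fin.last (d + 1)) ^ (-α - 1) / n := by
  set β : ℝ := -((d : ℝ) + 2) - α with hβdef
  have hβ : β ≤ 0 := by rw [hβdef]; push_cast; nlinarith [hα0]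
  set K : ENNReal := ∫⁻ w : Fin (d+1) → ℝ, ENNReal.ofReal ((1 + ‖w‖) ^ β) with hKdef
  have hK : K < ⊤ := by
    have h := finite_integral_one_add_norm (E := Fin (d+1) → ℝ) (μ := volume)
      (r := (d : ℝ) + 2 + α) (by
        rw [Module.finrank_fintype_fun_eq_card, Fintype.card_fin]; push_cast; linarith)
    have : β = -((d : ℝ) + 2 + α) := by rw [hβdef]; ring
    rw [hKdef, this]
    exact h
  refine ⟨(2:ℝ) ^ (-β) * 2 ^ (α + 1) * K.toReal, ?_⟩
  intro n hn x hside hxlo hxhi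
  have hn0 : (0:ℝ) < n := by exact_mod_cast hn
  set xL : ℝ := x (Fin.last (d + 1)) with hxLdef
  have hxL : 0 < xL := lt_of_lt_of_le (by positivity) hxlo
  set a : ℝ := xL / 2 with hadef
  have ha : 0 < a := by positivity
  have h1na : 1 / (n:ℝ) ≤ a := by
    rw [hadef]
    rw [div_le_iff₀ hn0] at hxlo ⊢
    linarith
  set x' : Fin (d+1) → ℝ := fun k => x k.castSucc with hx'def
  set S : Set (EuclideanSpace ℝ (Fin (d + 2))) :=
    {y | 0 < y (Fin.last (d + 1)) ∧ y (Fin.last (d + 1)) < 1 / (n : ℝ)} with hSdef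
  set f : EuclideanSpace ℝ (Fin (d + 2)) → ℝ := fun y => ‖x - y‖ ^ β with hfdef
  have hf_meas : Measurable f := by fun_prop
  have hf_nonneg : ∀ y, 0 ≤ f y := fun y => Real.rpow_nonneg (norm_nonneg _) _
  rw [integral_eq_lintegral_of_nonneg_ae (Filter.Eventually.of_forall hf_nonneg)
    hf_meas.aestronglyMeasurable]
  -- change of variables
  set F : EuclideanSpace ℝ (Fin (d + 2)) → ENNReal := fun y => ENNReal.ofReal (f y) with hFdef
  set e : EuclideanSpace ℝ (Fin (d+2)) ≃ᵐ (ℝ × (Fin (d+1) → ℝ)) :=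
    (MeasurableEquiv.toLp 2 (Fin (d+2) → ℝ)).symm.trans
      (MeasurableEquiv.piFinSuccAbove (fun _ : Fin (d+2) => ℝ) (Fin.last (d+1))) with he
  have hep : MeasurePreserving e := by
    exact (volume_preserving_piFinSuccAbove (fun _ : Fin (d+2) => ℝ) (Fin.last (d+1))).comp
      (EuclideanSpace.volume_preserving_symm_measurableEquiv_toLp (Fin (d+2)))
  have hchange : ∫⁻ p in (⇑e.symm) ⁻¹' S, F (e.symm p) = ∫⁻ y in S, F y :=
    (hep.symm e).setLIntegral_comp_preimage_emb e.symm.measurableEmbedding F S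
  have hL : ∀ p : ℝ × (Fin (d+1) → ℝ), (e.symm p) (Fin.last (d+1)) = p.1 := by
    intro p
    simp [he, MeasurableEquiv.piFinSuccAbove, MeasurableEquiv.coe_toLp,
      MeasurableEquiv.trans, MeasurableEquiv.symm, Fin.snocEquiv, Fin.snoc_last,
      Fin.snoc_castSucc, Fin.succAbove_last]
  have hC : ∀ (p : ℝ × (Fin (d+1) → ℝ)) (k : Fin (d+1)), (e.symm p) k.castSucc = p.2 k := by
    intro p k
    rw [← Fin.succAbove_last]
    simp [he, MeasurableEquiv.piFinSuccAbove, MeasurableEquiv.coe_toLp,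
      MeasurableEquiv.trans, MeasurableEquiv.symm, Fin.snocEquiv, Fin.snoc_last,
      Fin.snoc_castSucc, Fin.succAbove_last]
  have hpre : (⇑e.symm) ⁻¹' S = Ioo (0:ℝ) (1/(n:ℝ)) ×ˢ (univ : Set (Fin (d+1) → ℝ)) := by
    ext p
    simp only [mem_preimage, hSdef, mem_setOf_eq, hL, mem_prod, mem_Ioo, mem_univ, and_true]
  have hnorm : ∀ p : ℝ × (Fin (d+1) → ℝ),
      ‖x - e.symm p‖ = Real.sqrt ((xL - p.1)^2 + ∑ k, (x' k - p.2 k)^2) := by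
    intro p
    rw [EuclideanSpace.norm_eq]
    congr 1
    rw [Fin.sum_univ_castSucc]
    have hsub : ∀ i : Fin (d+2), (x - e.symm p) i = x i - (e.symm p) i := fun i => rfl
    simp only [hsub, hL, hC, Real.norm_eq_abs, sq_abs]
    rw [add_comm]
  -- pointwise bound on the region
  have hbd : ∀ p ∈ Ioo (0:ℝ) (1/(n:ℝ)) ×ˢ (univ : Set (Fin (d+1) → ℝ)),
      F (e.symm p) ≤ ENNReal.ofReal ((2:ℝ) ^ (-β) * (a + ‖p.2 - x'‖) ^ β) := by
    rintro ⟨t, z⟩ ⟨⟨ht0, ht1⟩, -⟩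
    rw [hFdef]
    simp only [hfdef]
    rw [hnorm]
    apply ENNReal.ofReal_le_ofReal
    set Q : ℝ := ∑ k, (x' k - z k)^2 with hQ
    have hQ0 : (0:ℝ) ≤ Q := by positivity
    set s : ℝ := Real.sqrt ((xL - t)^2 + Q) with hs
    have h1 : a ≤ s := by
      have h1' : a ≤ xL - t := by
        have : t < a := lt_of_lt_of_le ht1 h1na
        rw [hadef] at this ⊢
        linarith
      calc a ≤ xL - t := h1'
        _ = Real.sqrt ((xL - t)^2) := (Real.sqrt_sq (by linarith [ha])).symm
        _ ≤ s := Real.sqrt_le_sqrt (by linarith)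
    have h2 : ‖z - x'‖ ≤ s := by
      rw [pi_norm_le_iff_of_nonneg (Real.sqrt_nonneg _)]
      intro k
      have hk : (x' k - z k)^2 ≤ Q := by
        rw [hQ]
        exact Finset.single_le_sum (f := fun k => (x' k - z k)^2)
          (fun i _ => by positivity) (Finset.mem_univ k)
      have : ‖(z - x') k‖ = Real.sqrt ((x' k - z k)^2) := by
        rw [Pi.sub_apply, Real.norm_eq_abs, Real.sqrt_sq_eq_abs, abs_sub_comm]
      rw [this]
      exact Real.sqrt_le_sqrt (by nlinarith [sq_nonneg (xL - t)])
    have h3 : (a + ‖z - x'‖)/2 ≤ s := by linarith [norm_nonneg (z - x')]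
    have h4 : s ^ β ≤ ((a + ‖z - x'‖)/2) ^ β :=
      Real.rpow_le_rpow_of_nonpos (by positivity) h3 hβ
    have h5 : ((a + ‖z - x'‖)/2) ^ β = (2:ℝ) ^ (-β) * (a + ‖z - x'‖) ^ β := by
      rw [Real.div_rpow (by positivity) (by norm_num), Real.rpow_neg (by norm_num)]
      rw [div_eq_mul_inv, mul_comm]
    rw [← h5]
    exact h4
  -- Tonelli + translation + scaling
  have htone : ∫⁻ p in Ioo (0:ℝ) (1/(n:ℝ)) ×ˢ (univ : Set (Fin (d+1) → ℝ)),
        ENNReal.ofReal ((2:ℝ) ^ (-β) * (a + ‖p.2 - x'‖) ^ β)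
      = ENNReal.ofReal ((2:ℝ) ^ (-β)) * (ENNReal.ofReal (1/(n:ℝ)) *
          ∫⁻ z : Fin (d+1) → ℝ, ENNReal.ofReal ((a + ‖z - x'‖) ^ β)) := by
    have hof : ∀ p : ℝ × (Fin (d+1) → ℝ), ENNReal.ofReal ((2:ℝ) ^ (-β) * (a + ‖p.2 - x'‖) ^ β)
        = ENNReal.ofReal ((2:ℝ) ^ (-β)) * ENNReal.ofReal ((a + ‖p.2 - x'‖) ^ β) := fun p =>
      ENNReal.ofReal_mul (by positivity)
    simp_rw [hof]
    rw [lintegral_const_mul' _ _ ENNReal.ofReal_ne_top]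
    rw [Measure.volume_eq_prod, ← Measure.prod_restrict, Measure.restrict_univ]
    rw [lintegral_prod _ (by fun_prop)]
    congr 1
    have hsc := setLIntegral_const (μ := (volume : Measure ℝ)) (Ioo (0:ℝ) (1/(n:ℝ)))
      (∫⁻ z : Fin (d+1) → ℝ, ENNReal.ofReal ((a + ‖z - x'‖) ^ β))
    rw [Real.volume_Ioo, sub_zero, mul_comm] at hsc
    exact hsc
  have htrans : ∫⁻ z : Fin (d+1) → ℝ, ENNReal.ofReal ((a + ‖z - x'‖) ^ β)
      = ∫⁻ z : Fin (d+1) → ℝ, ENNReal.ofReal ((a + ‖z‖) ^ β) := by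
    have h := lintegral_add_right_eq_self (μ := (volume : Measure (Fin (d+1) → ℝ)))
      (fun z => ENNReal.ofReal ((a + ‖z‖) ^ β)) (-x')
    simp_rw [sub_eq_add_neg]
    exact h
  have hscale := aux_scale d β a ha
  set B : ENNReal := ENNReal.ofReal ((2:ℝ) ^ (-β)) * (ENNReal.ofReal (1/(n:ℝ)) *
      (ENNReal.ofReal (a ^ (β + ((d:ℕ)+1 : ℕ))) * K)) with hBdef
  have hB : ∫⁻ y in S, F y ≤ B := by
    rw [← hchange, hpre]
    calc ∫⁻ p in Ioo (0:ℝ) (1/(n:ℝ)) ×ˢ (univ : Set (Fin (d+1) → ℝ)), F (e.symm p)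
        ≤ ∫⁻ p in Ioo (0:ℝ) (1/(n:ℝ)) ×ˢ (univ : Set (Fin (d+1) → ℝ)),
            ENNReal.ofReal ((2:ℝ) ^ (-β) * (a + ‖p.2 - x'‖) ^ β) :=
          setLIntegral_mono' (measurableSet_Ioo.prod MeasurableSet.univ) hbd
      _ = ENNReal.ofReal ((2:ℝ) ^ (-β)) * (ENNReal.ofReal (1/(n:ℝ)) *
            ∫⁻ z : Fin (d+1) → ℝ, ENNReal.ofReal ((a + ‖z - x'‖) ^ β)) := htone
      _ = B := by rw [htrans, hscale, hBdef]
  have hBne : B ≠ ⊤ := by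
    rw [hBdef]
    exact ENNReal.mul_ne_top ENNReal.ofReal_ne_top (ENNReal.mul_ne_top ENNReal.ofReal_ne_top
      (ENNReal.mul_ne_top ENNReal.ofReal_ne_top hK.ne))
  refine le_trans (ENNReal.toReal_mono hBne hB) ?_
  rw [hBdef]
  rw [ENNReal.toReal_mul, ENNReal.toReal_mul, ENNReal.toReal_mul,
    ENNReal.toReal_ofReal (by positivity), ENNReal.toReal_ofReal (by positivity),
    ENNReal.toReal_ofReal (Real.rpow_nonneg ha.le _)]
  have hexp : β + (((d:ℕ)+1 : ℕ) : ℝ) = -α - 1 := by rw [hβdef]; push_cast; ring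
  have haval : a ^ (-α - 1 : ℝ) = xL ^ (-α - 1 : ℝ) * (2:ℝ) ^ (α + 1 : ℝ) := by
    rw [hadef, Real.div_rpow hxL.le (by norm_num : (0:ℝ) ≤ 2)]
    rw [show (-α - 1 : ℝ) = -(α + 1) by ring, Real.rpow_neg (by norm_num : (0:ℝ) ≤ 2)]
    rw [div_eq_mul_inv, inv_inv]
  rw [hexp, haval]
  have hK0 : 0 ≤ K.toReal := ENNReal.toReal_nonneg
  apply le_of_eq
  ring
end
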